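/- arXiv:2105.14856 — 4 statements merged into one kernel-verified Lean document; each statement's English description precedes it below -/
import Mathlib

section
/- Let G be a finite graph and L a list assignment with |L(v)| ≥ deg(v) for every vertex v. If G is connected and some vertex v satisfies |L(v)| > deg(v), then G admits a proper L-coloring. -/
lemma min_getD_mem (s : Finset ℕ) (hs : s.Nonempty) : s.min.getD 0 ∈ s := by
  rw [← Finset.coe_min' hs]
  exact Finset.min'_mem s hs

noncomputable def greedyCol {V : Type*} [Fintype V] (G : SimpleGraph V) [DecidableRel G.Adj]
    (L : V → Finset ℕ) (idx : V → ℕ) (u : V) : ℕ :=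
  (L u \ ((G.neighborFinset u).filter (fun w => idx w < idx u)).attach.image
      (fun w => greedyCol G L idx w.1)).min.getD 0
termination_by idx u
decreasing_by exact (Finset.mem_filter.mp w.2).2

lemma greedyCol_spec {V : Type*} [Fintype V] (G : SimpleGraph V) [DecidableRel G.Adj]
    (L : V → Finset ℕ) (idx : V → ℕ) (u : V)
    (hne : (L u \ ((G.neighborFinset u).filter (fun w => idx w < idx u)).attach.image
      (fun w => greedyCol G L idx w.1)).Nonempty) :
    greedyCol G L idx u ∈ L u ∧
      ∀ w, G.Adj u w → idx w < idx u → greedyCol G L idx w ≠ greedyCol G L idx u := by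
  rw [greedyCol]
  have h := min_getD_mem _ hne
  rw [Finset.mem_sdiff] at h
  refine ⟨h.1, fun w hadj hlt hcontra => h.2 ?_⟩
  rw [Finset.mem_image]
  exact ⟨⟨w, Finset.mem_filter.mpr ⟨(G.mem_neighborFinset u w).mpr hadj, hlt⟩⟩,
    Finset.mem_attach _ _, hcontra⟩

/-- Borodin–Erdős–Rubin–Taylor, first case: if `G` is connected, every vertex `v` has a
list `L v` of size at least `deg v`, and some vertex has a strictly larger list, then `G`
admits a proper `L`-coloring. -/
theorem degree_choosable_of_some_larger_list {V : Type*} [Fintype V]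
    (G : SimpleGraph V) [DecidableRel G.Adj]
    (L : V → Finset ℕ)
    (hL : ∀ v, G.degree v ≤ (L v).card)
    (hconn : G.Connected)
    (hbig : ∃ v, G.degree v < (L v).card) :
    ∃ c : V → ℕ, (∀ v, c v ∈ L v) ∧ ∀ u v, G.Adj u v → c u ≠ c v := by
  classical
  obtain ⟨v, hv⟩ := hbig
  set n := Fintype.card V with hn
  let e := Fintype.equivFin V
  set idx : V → ℕ := fun u => (e u : ℕ) + n * (n - G.dist u v) with hidx
  -- idx is injective
  have hidx_inj : Function.Injective idx := by
    intro a b hab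
    have h1 : (e a : ℕ) < n := (e a).isLt
    have h2 : (e b : ℕ) < n := (e b).isLt
    have hmod := congrArg (· % n) hab
    simp only [hidx, Nat.add_mul_mod_self_left] at hmod
    rw [Nat.mod_eq_of_lt h1, Nat.mod_eq_of_lt h2] at hmod
    exact e.injective (Fin.ext hmod)
  -- every distance is < n
  have hdist_lt : ∀ u : V, G.dist u v < n := by
    intro u
    obtain ⟨p, hp, hlen⟩ := hconn.exists_path_of_dist u v
    rw [← hlen]
    exact hp.length_lt
  -- every vertex other than v has a neighbor with larger idx
  have hstep : ∀ u : V, u ≠ v → ∃ w, G.Adj u w ∧ idx u < idx w := by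
    intro u hu
    obtain ⟨p, hp⟩ := (hconn u v).exists_walk_length_eq_dist
    have hpos : 0 < G.dist u v := hconn.pos_dist_of_ne hu
    cases p with
    | nil => simp at hpos
    | cons h q =>
      rename_i w
      refine ⟨w, h, ?_⟩
      have hwd : G.dist w v ≤ q.length := SimpleGraph.dist_le q
      rw [SimpleGraph.Walk.length_cons] at hp
      have hlt : G.dist w v < G.dist u v := by omega
      have hdu : G.dist u v < n := hdist_lt u
      have h1 : (e u : ℕ) < n := (e u).isLt
      have hsub : n - G.dist u v + 1 ≤ n - G.dist w v := by omega
      calc idx u = (e u : ℕ) + n * (n - G.dist u v) := rfl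
        _ < n * (n - G.dist u v + 1) := by rw [Nat.mul_succ]; omega
        _ ≤ n * (n - G.dist w v) := Nat.mul_le_mul_left n hsub
        _ ≤ (e w : ℕ) + n * (n - G.dist w v) := Nat.le_add_left _ _
  -- the filter-set for the greedy choice is always nonempty
  have key : ∀ u : V, (L u \ ((G.neighborFinset u).filter (fun w => idx w < idx u)).attach.image
      (fun w => greedyCol G L idx w.1)).Nonempty := by
    intro u
    set S := ((G.neighborFinset u).filter (fun w => idx w < idx u)).attach.image
      (fun w => greedyCol G L idx w.1) with hS
    have hScard : S.card ≤ ((G.neighborFinset u).filter (fun w => idx w < idx u)).card := by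
      calc S.card ≤ ((G.neighborFinset u).filter (fun w => idx w < idx u)).attach.card :=
            Finset.card_image_le
        _ = _ := Finset.card_attach
    have hSlt : S.card < (L u).card := by
      by_cases hu : u = v
      · subst hu
        have : ((G.neighborFinset u).filter (fun w => idx w < idx u)).card ≤ G.degree u :=
          le_trans (Finset.card_le_card (Finset.filter_subset _ _)) le_rfl
        omega
      · obtain ⟨w0, hw0adj, hw0⟩ := hstep u hu
        have hss : (G.neighborFinset u).filter (fun w => idx w < idx u) ⊂ G.neighborFinset u := by
          rw [Finset.ssubset_iff_of_subset (Finset.filter_subset _ _)]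
          exact ⟨w0, (G.mem_neighborFinset u w0).mpr hw0adj, by
            simp only [Finset.mem_filter]; push_neg; intro _; omega⟩
        have hlt := Finset.card_lt_card hss
        have hdeg := hL u
        rw [← SimpleGraph.card_neighborFinset_eq_degree] at hdeg
        omega
    have := Finset.le_card_sdiff S (L u)
    rw [← Finset.card_pos]
    omega
  refine ⟨greedyCol G L idx, fun u => (greedyCol_spec G L idx u (key u)).1, ?_⟩
  intro a b hab hEq
  rcases lt_trichotomy (idx a) (idx b) with h1 | h1 | h1
  · exact (greedyCol_spec G L idx b (key b)).2 a hab.symm h1 hEq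
  · exact hab.ne (hidx_inj h1)
  · exact (greedyCol_spec G L idx a (key a)).2 b hab h1 hEq.symm
end

section
/- Let G be a finite connected graph and L a list assignment with |L(v)| ≥ deg(v) for every vertex v. If some block of G is neither a complete graph nor an odd cycle (i.e., G is not a Gallai tree), then G admits a proper L-coloring. -/
variable {V : Type*}

/-- A set `B` of vertices induces a connected subgraph with no cut vertex. -/
def NoCutVertexOn (G : SimpleGraph V) (B : Set V) : Prop :=
  (G.induce B).Connected ∧ ∀ v ∈ B, (G.induce (B \ {v})).Preconnected

/-- A block of `G`: a maximal vertex set inducing a connected subgraph without cut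
vertices. -/
def IsBlockOn (G : SimpleGraph V) (B : Set V) : Prop :=
  NoCutVertexOn G B ∧ ∀ B' : Set V, B ⊆ B' → NoCutVertexOn G B' → B' = B

/-- The subgraph induced on `B` is a complete graph. -/
def IsCompleteOn (G : SimpleGraph V) (B : Set V) : Prop :=
  ∀ u v : B, u ≠ v → (G.induce B).Adj u v

/-- The subgraph induced on `B` is an odd cycle. -/
def IsOddCycleOn (G : SimpleGraph V) (B : Set V) : Prop :=
  ∃ n : ℕ, Odd n ∧ Nonempty ((G.induce B) ≃g SimpleGraph.cycleGraph n)


open Finset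

section Engine
variable {V : Type*} [Fintype V] [DecidableEq V] (G : SimpleGraph V) [DecidableRel G.Adj]

/-- Greedy list-coloring engine.  `l` is the list of vertices to be colored now (in order),
`U` is a set of vertices that will never be colored (ignored), `c` is the pre-coloring off
`l ∪ U`. -/
theorem greedy_engine (L : V → Finset ℕ) (U : Finset V) :
    ∀ (l : List V) (c : V → ℕ), l.Nodup → (∀ x ∈ l, x ∉ U) →
    (∀ v, v ∉ l → v ∉ U → c v ∈ L v) →
    (∀ u v, G.Adj u v → u ∉ l → v ∉ l → u ∉ U → v ∉ U → c u ≠ c v) →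
    (∀ l₁ v l₂, l = l₁ ++ v :: l₂ →
      ((G.neighborFinset v).filter (fun u => u ∈ l₁)).card
        < ((L v) \ (((G.neighborFinset v).filter (fun u => u ∉ l ∧ u ∉ U)).image c)).card) →
    ∃ c' : V → ℕ, (∀ v, v ∉ l → c' v = c v) ∧ (∀ v, v ∉ U → c' v ∈ L v) ∧
      (∀ u v, G.Adj u v → u ∉ U → v ∉ U → c' u ≠ c' v) := by
  intro l
  induction l with
  | nil =>
    intro c _ _ hm hp _
    exact ⟨c, fun v _ => rfl, fun v hv => hm v (by simp) hv,
      fun u v h hu hv => hp u v h (by simp) (by simp) hu hv⟩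
  | cons v t ih =>
    intro c hnd hU hm hp hcnt
    have hvU : v ∉ U := hU v (by simp)
    have hvt : v ∉ t := by simp [List.nodup_cons] at hnd; exact hnd.1
    -- choose a color for v
    have h0 := hcnt [] v t rfl
    have hne : ((L v) \ (((G.neighborFinset v).filter (fun u => u ∉ v :: t ∧ u ∉ U)).image c)).Nonempty := by
      refine Finset.card_pos.mp ?_
      calc 0 ≤ ((G.neighborFinset v).filter (fun u => u ∈ ([] : List V))).card := Nat.zero_le _
        _ < _ := h0
    obtain ⟨α, hα⟩ := hne
    have hαL : α ∈ L v := (Finset.mem_sdiff.mp hα).1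
    have hαim : α ∉ (((G.neighborFinset v).filter (fun u => u ∉ v :: t ∧ u ∉ U)).image c) :=
      (Finset.mem_sdiff.mp hα).2
    set c₁ : V → ℕ := Function.update c v α with hc₁
    have hc₁v : c₁ v = α := Function.update_self _ _ _
    have hc₁x : ∀ x, x ≠ v → c₁ x = c x := fun x hx => Function.update_of_ne hx _ _
    -- apply IH
    have hnd' : t.Nodup := (List.nodup_cons.mp hnd).2
    have hU' : ∀ x ∈ t, x ∉ U := fun x hx => hU x (by simp [hx])
    have hm' : ∀ x, x ∉ t → x ∉ U → c₁ x ∈ L x := by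
      intro x hx hxU
      by_cases hxv : x = v
      · subst hxv; rw [hc₁v]; exact hαL
      · rw [hc₁x x hxv]; exact hm x (by simp [hx, hxv]) hxU
    have hp' : ∀ u w, G.Adj u w → u ∉ t → w ∉ t → u ∉ U → w ∉ U → c₁ u ≠ c₁ w := by
      intro a b hadj hat hbt haU hbU
      by_cases hav : a = v
      · have hbv : b ≠ v := by rintro rfl; rw [hav] at hadj; exact G.loopless.irrefl _ hadj
        rw [hav, hc₁v, hc₁x b hbv]
        intro hEq
        apply hαim
        refine Finset.mem_image.mpr ⟨b, Finset.mem_filter.mpr ⟨?_, by simp [hbt, hbv], hbU⟩, hEq.symm⟩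
        rw [SimpleGraph.mem_neighborFinset]
        exact (hav ▸ hadj)
      · by_cases hbv : b = v
        · rw [hbv, hc₁v, hc₁x a hav]
          intro hEq
          apply hαim
          refine Finset.mem_image.mpr ⟨a, Finset.mem_filter.mpr ⟨?_, by simp [hat, hav], haU⟩, hEq⟩
          rw [SimpleGraph.mem_neighborFinset]
          exact (hbv ▸ hadj).symm
        · rw [hc₁x a hav, hc₁x b hbv]
          exact hp a b hadj (by simp [hat, hav]) (by simp [hbt, hbv]) haU hbU
    have hcnt' : ∀ l₁ w l₂, t = l₁ ++ w :: l₂ →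
        ((G.neighborFinset w).filter (fun u => u ∈ l₁)).card
          < ((L w) \ (((G.neighborFinset w).filter (fun u => u ∉ t ∧ u ∉ U)).image c₁)).card := by
      intro l₁ w l₂ hdec
      have hdec' : v :: t = (v :: l₁) ++ w :: l₂ := by simp [hdec]
      have horig := hcnt (v :: l₁) w l₂ hdec'
      have hwt : w ∈ t := by rw [hdec]; simp
      have hwv : w ≠ v := fun h => hvt (h ▸ hwt)
      have hvl₁ : v ∉ l₁ := by
        intro h
        exact hvt (by rw [hdec]; exact List.mem_append.mpr (Or.inl h))
      -- the new precolored set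
      have hsplit : ((G.neighborFinset w).filter (fun u => u ∉ t ∧ u ∉ U))
          = ((G.neighborFinset w).filter (fun u => u ∉ v :: t ∧ u ∉ U))
            ∪ ((G.neighborFinset w).filter (fun u => u = v)) := by
        ext x
        simp only [Finset.mem_union, Finset.mem_filter, List.mem_cons]
        constructor
        · rintro ⟨hx, hxt, hxU⟩
          by_cases hxv : x = v
          · exact Or.inr ⟨hx, hxv⟩
          · exact Or.inl ⟨hx, by tauto, hxU⟩
        · rintro (⟨hx, hxt, hxU⟩ | ⟨hx, rfl⟩)
          · exact ⟨hx, fun h => hxt (Or.inr h), hxU⟩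
          · exact ⟨hx, hvt, hvU⟩
      by_cases hvw : v ∈ G.neighborFinset w
      · -- v is a neighbor of w
        have h1 : ((G.neighborFinset w).filter (fun u => u ∈ v :: l₁))
            = insert v ((G.neighborFinset w).filter (fun u => u ∈ l₁)) := by
          ext x
          simp only [Finset.mem_insert, Finset.mem_filter, List.mem_cons]
          constructor
          · rintro ⟨hx, (rfl | hxl)⟩
            · exact Or.inl rfl
            · exact Or.inr ⟨hx, hxl⟩
          · rintro (rfl | ⟨hx, hxl⟩)
            · exact ⟨hvw, Or.inl rfl⟩
            · exact ⟨hx, Or.inr hxl⟩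
        have hvnot : v ∉ ((G.neighborFinset w).filter (fun u => u ∈ l₁)) := by
          simp [hvl₁]
        rw [h1, Finset.card_insert_of_notMem hvnot] at horig
        have h2 : ((G.neighborFinset w).filter (fun u => u = v)) = {v} := by
          ext x; simp only [Finset.mem_filter, Finset.mem_singleton]
          exact ⟨fun h => h.2, fun h => ⟨h ▸ hvw, h⟩⟩
        have him : (((G.neighborFinset w).filter (fun u => u ∉ t ∧ u ∉ U)).image c₁)
            ⊆ insert α (((G.neighborFinset w).filter (fun u => u ∉ v :: t ∧ u ∉ U)).image c) := by
          rw [hsplit, h2]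
          intro y hy
          obtain ⟨x, hx, hxy⟩ := Finset.mem_image.mp hy
          rcases Finset.mem_union.mp hx with hx' | hx'
          · have hxv : x ≠ v := by
              intro h; subst h
              have := (Finset.mem_filter.mp hx').2.1
              simp at this
            rw [hc₁x x hxv] at hxy
            exact Finset.mem_insert.mpr (Or.inr (Finset.mem_image.mpr ⟨x, hx', hxy⟩))
          · have hxv : x = v := Finset.mem_singleton.mp hx'
            subst hxv
            rw [hc₁v] at hxy
            exact Finset.mem_insert.mpr (Or.inl hxy.symm)
        have hRHS : ((L w) \ (((G.neighborFinset w).filter (fun u => u ∉ v :: t ∧ u ∉ U)).image c)).card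
            ≤ ((L w) \ (((G.neighborFinset w).filter (fun u => u ∉ t ∧ u ∉ U)).image c₁)).card + 1 := by
          calc ((L w) \ (((G.neighborFinset w).filter (fun u => u ∉ v :: t ∧ u ∉ U)).image c)).card
              ≤ (insert α ((L w) \ (((G.neighborFinset w).filter (fun u => u ∉ t ∧ u ∉ U)).image c₁))).card := by
                apply Finset.card_le_card
                intro y hy
                rcases Finset.mem_sdiff.mp hy with ⟨hyL, hyim⟩
                by_cases hyα : y = α
                · exact Finset.mem_insert.mpr (Or.inl hyα)
                · refine Finset.mem_insert.mpr (Or.inr (Finset.mem_sdiff.mpr ⟨hyL, fun hc => ?_⟩))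
                  rcases Finset.mem_insert.mp (him hc) with h | h
                  · exact hyα h
                  · exact hyim h
            _ ≤ _ := Finset.card_insert_le _ _
        omega
      · -- v is not a neighbor of w : nothing changes
        have h1 : ((G.neighborFinset w).filter (fun u => u ∈ v :: l₁))
            = ((G.neighborFinset w).filter (fun u => u ∈ l₁)) := by
          ext x
          simp only [Finset.mem_filter, List.mem_cons]
          constructor
          · rintro ⟨hx, (rfl | hxl)⟩
            · exact absurd hx hvw
            · exact ⟨hx, hxl⟩
          · rintro ⟨hx, hxl⟩; exact ⟨hx, Or.inr hxl⟩
        have h2 : ((G.neighborFinset w).filter (fun u => u ∉ t ∧ u ∉ U))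
            = ((G.neighborFinset w).filter (fun u => u ∉ v :: t ∧ u ∉ U)) := by
          rw [hsplit]
          have : ((G.neighborFinset w).filter (fun u => u = v)) = ∅ := by
            ext x; simp only [Finset.mem_filter, Finset.notMem_empty, iff_false]
            rintro ⟨hx, rfl⟩; exact hvw hx
          rw [this, Finset.union_empty]
        have h3 : (((G.neighborFinset w).filter (fun u => u ∉ v :: t ∧ u ∉ U)).image c₁)
            = (((G.neighborFinset w).filter (fun u => u ∉ v :: t ∧ u ∉ U)).image c) := by
          apply Finset.image_congr
          intro x hx
          simp only [Finset.coe_filter, Set.mem_setOf_eq] at hx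
          have hxv : x ≠ v := by
            intro h; subst h; exact hx.2.1 (by simp)
          exact hc₁x x hxv
        rw [h2, h3, ← h1]
        exact horig
    obtain ⟨c', hc'1, hc'2, hc'3⟩ := ih c₁ hnd' hU' hm' hp' hcnt'
    refine ⟨c', fun x hx => ?_, hc'2, hc'3⟩
    have hxv : x ≠ v := fun h => hx (h ▸ List.mem_cons_self (a := v) (l := t))
    have hxt : x ∉ t := fun h => hx (List.mem_cons_of_mem _ h)
    rw [hc'1 x hxt, hc₁x x hxv]

end Engine

open Finset

section DW
variable {V : Type*} {G : SimpleGraph V}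

/-- There is a `G`-walk from `u` to `v` whose support lies in `S`. -/
def DW (G : SimpleGraph V) (S : Set V) (u v : V) : Prop :=
  ∃ p : G.Walk u v, ∀ x ∈ p.support, x ∈ S

theorem DW.refl {S : Set V} {u : V} (hu : u ∈ S) : DW G S u u :=
  ⟨SimpleGraph.Walk.nil, by simp [hu]⟩

theorem DW.mem_left {S : Set V} {u v : V} (h : DW G S u v) : u ∈ S := by
  obtain ⟨p, hp⟩ := h; exact hp u p.start_mem_support

theorem DW.mem_right {S : Set V} {u v : V} (h : DW G S u v) : v ∈ S := by
  obtain ⟨p, hp⟩ := h; exact hp v p.end_mem_support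

theorem DW.symm {S : Set V} {u v : V} (h : DW G S u v) : DW G S v u := by
  obtain ⟨p, hp⟩ := h
  exact ⟨p.reverse, by intro x hx; rw [SimpleGraph.Walk.support_reverse] at hx
                       exact hp x (List.mem_reverse.mp hx)⟩

theorem DW.trans {S : Set V} {u v w : V} (h : DW G S u v) (h' : DW G S v w) : DW G S u w := by
  obtain ⟨p, hp⟩ := h; obtain ⟨q, hq⟩ := h'
  refine ⟨p.append q, ?_⟩
  intro x hx
  rw [SimpleGraph.Walk.support_append] at hx
  rcases List.mem_append.mp hx with h | h
  · exact hp x h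
  · exact hq x (List.mem_of_mem_tail h)

theorem DW.mono {S T : Set V} (hST : S ⊆ T) {u v : V} (h : DW G S u v) : DW G T u v := by
  obtain ⟨p, hp⟩ := h; exact ⟨p, fun x hx => hST (hp x hx)⟩

theorem DW.of_adj {S : Set V} {u v : V} (h : G.Adj u v) (hu : u ∈ S) (hv : v ∈ S) :
    DW G S u v :=
  ⟨SimpleGraph.Walk.cons h SimpleGraph.Walk.nil, by
    intro x hx
    simp only [SimpleGraph.Walk.support_cons, SimpleGraph.Walk.support_nil, List.mem_cons,
      List.mem_singleton] at hx
    rcases hx with h | h | h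
    · exact h ▸ hu
    · exact h ▸ hv
    · cases h⟩

/-- Walks in the induced graph give walks within the set. -/
theorem dw_of_induce_walk {S : Set V} : ∀ {a b : S}, (G.induce S).Walk a b → DW G S a.1 b.1 := by
  intro a b p
  induction p with
  | nil => exact DW.refl (Subtype.coe_prop _)
  | @cons x y z h p ih =>
    exact (DW.of_adj (by simpa [SimpleGraph.induce] using h) x.2 y.2).trans ih

theorem dw_of_induce_preconnected {S : Set V} (h : (G.induce S).Preconnected)
    {u v : V} (hu : u ∈ S) (hv : v ∈ S) : DW G S u v := by
  obtain ⟨p⟩ := h ⟨u, hu⟩ ⟨v, hv⟩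
  exact dw_of_induce_walk p

/-- Rank: the minimal length of a walk within `S` from `w` to `y`. -/
noncomputable def drank (G : SimpleGraph V) (S : Set V) (y w : V) : ℕ :=
  sInf {n | ∃ p : G.Walk w y, p.length = n ∧ ∀ x ∈ p.support, x ∈ S}

theorem drank_le {S : Set V} {y w : V} (p : G.Walk w y) (hp : ∀ x ∈ p.support, x ∈ S) :
    drank G S y w ≤ p.length :=
  Nat.sInf_le ⟨p, rfl, hp⟩

/-- From a vertex different from the root, reachable within `S`, there is a neighbor
within `S` which is strictly closer to the root. -/
theorem drank_step {S : Set V} {y w : V} (h : DW G S w y) (hne : w ≠ y) :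
    ∃ u, G.Adj w u ∧ u ∈ S ∧ DW G S u y ∧ drank G S y u < drank G S y w := by
  obtain ⟨p, hp⟩ := h
  have hset : {n | ∃ p : G.Walk w y, p.length = n ∧ ∀ x ∈ p.support, x ∈ S}.Nonempty :=
    ⟨p.length, p, rfl, hp⟩
  obtain ⟨q, hq, hqS⟩ := Nat.sInf_mem hset
  cases q with
  | nil => exact absurd rfl hne
  | cons hadj q' =>
    rename_i u
    refine ⟨u, hadj, ?_, ⟨q', ?_⟩, ?_⟩
    · exact hqS u (by simp)
    · intro x hx; exact hqS x (by simp [hx])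
    · have h1 : drank G S y u ≤ q'.length := drank_le q' (fun x hx => hqS x (by simp [hx]))
      have h2 : q'.length + 1 = drank G S y w := by
        simpa [drank] using hq
      omega

end DW

section SortedColoring
set_option linter.unusedSectionVars false
variable {V : Type*} [Fintype V] [DecidableEq V] (G : SimpleGraph V) [DecidableRel G.Adj]

/-- Sort the elements of `s` in order of decreasing rank `r`. -/
noncomputable def descList (r : V → ℕ) (s : Finset V) : List V :=
  s.toList.mergeSort (fun a b => decide (r b ≤ r a))

theorem descList_perm (r : V → ℕ) (s : Finset V) : (descList r s).Perm s.toList :=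
  List.mergeSort_perm _ _

theorem mem_descList {r : V → ℕ} {s : Finset V} {x : V} : x ∈ descList r s ↔ x ∈ s := by
  rw [(descList_perm r s).mem_iff, Finset.mem_toList]

theorem descList_nodup (r : V → ℕ) (s : Finset V) : (descList r s).Nodup :=
  (descList_perm r s).nodup_iff.mpr s.nodup_toList

theorem descList_sorted (r : V → ℕ) (s : Finset V) :
    (descList r s).Pairwise (fun a b => r b ≤ r a) := by
  have := List.pairwise_mergeSort (le := fun a b => decide (r b ≤ r a))
    (fun a b c hab hbc => by simp at hab hbc ⊢; omega)
    (fun a b => by simp; omega) s.toList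
  exact this.imp (fun h => by simpa using h)

/-- In a decreasing-rank list, anything of smaller rank than `v` comes after `v`. -/
theorem descList_mem_suffix {r : V → ℕ} {s : Finset V} {l₁ l₂ : List V} {v u : V}
    (h : descList r s = l₁ ++ v :: l₂) (hu : u ∈ s) (hlt : r u < r v) : u ∈ l₂ := by
  have hul : u ∈ l₁ ++ v :: l₂ := h ▸ mem_descList.mpr hu
  have hsorted : (l₁ ++ v :: l₂).Pairwise (fun a b => r b ≤ r a) := h ▸ descList_sorted r s
  rcases List.mem_append.mp hul with h1 | h1
  · exfalso
    have := (List.pairwise_append.mp hsorted).2.2 u h1 v (by simp)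
    omega
  · rcases List.mem_cons.mp h1 with h2 | h2
    · exfalso; rw [h2] at hlt; omega
    · exact h2

end SortedColoring
open Finset
section ColorSet
variable {V : Type*} [Fintype V] [DecidableEq V] (G : SimpleGraph V) [DecidableRel G.Adj]

theorem colorSet (L : V → Finset ℕ) (S : Finset V) (y₀ : V) (hy₀ : y₀ ∈ S) (c : V → ℕ)
    (hm : ∀ v, v ∉ S → c v ∈ L v)
    (hp : ∀ u v, G.Adj u v → u ∉ S → v ∉ S → c u ≠ c v)
    (hreach : ∀ w ∈ S, DW G ↑S w y₀)
    (hcnt : ∀ w ∈ S, w ≠ y₀ → ((G.neighborFinset w).filter (fun u => u ∈ S)).card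
        ≤ ((L w) \ (((G.neighborFinset w).filter (fun u => u ∉ S)).image c)).card)
    (hy : ((G.neighborFinset y₀).filter (fun u => u ∈ S)).card
        < ((L y₀) \ (((G.neighborFinset y₀).filter (fun u => u ∉ S)).image c)).card) :
    ∃ c' : V → ℕ, (∀ v, v ∉ S → c' v = c v) ∧ (∀ v, c' v ∈ L v) ∧
      (∀ u v, G.Adj u v → c' u ≠ c' v) := by
  classical
  set r : V → ℕ := drank G ↑S y₀ with hr
  set l : List V := descList r S with hl
  have hmeml : ∀ {x : V}, x ∈ l ↔ x ∈ S := fun {x} => mem_descList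
  have key : ∀ l₁ v l₂, l = l₁ ++ v :: l₂ →
      ((G.neighborFinset v).filter (fun u => u ∈ l₁)).card
        < ((L v) \ (((G.neighborFinset v).filter (fun u => u ∉ l ∧ u ∉ (∅ : Finset V))).image c)).card := by
    intro l₁ v l₂ hdec
    have hfilt : ((G.neighborFinset v).filter (fun u => u ∉ l ∧ u ∉ (∅ : Finset V)))
        = ((G.neighborFinset v).filter (fun u => u ∉ S)) := by
      apply Finset.filter_congr
      intro x _
      simp [hmeml]
    rw [hfilt]
    have hvl : v ∈ l := by rw [hdec]; simp
    have hvS : v ∈ S := hmeml.mp hvl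
    have hl₁S : ∀ x ∈ l₁, x ∈ S := by
      intro x hx
      exact hmeml.mp (by rw [hdec]; exact List.mem_append.mpr (Or.inl hx))
    by_cases hvy : v = y₀
    · subst hvy
      calc ((G.neighborFinset v).filter (fun u => u ∈ l₁)).card
          ≤ ((G.neighborFinset v).filter (fun u => u ∈ S)).card := by
            apply Finset.card_le_card
            intro x hx
            rcases Finset.mem_filter.mp hx with ⟨h1, h2⟩
            exact Finset.mem_filter.mpr ⟨h1, hl₁S x h2⟩
        _ < _ := hy
    · obtain ⟨u, hadj, huS, _, hrk⟩ := drank_step (hreach v hvS) hvy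
      have hul₂ : u ∈ l₂ := descList_mem_suffix hdec huS hrk
      have hul₁ : u ∉ l₁ := by
        have hnd : (l₁ ++ v :: l₂).Nodup := hdec ▸ descList_nodup r S
        intro h
        exact (List.disjoint_of_nodup_append hnd) h (by simp [hul₂])
      have hsub : ((G.neighborFinset v).filter (fun u => u ∈ l₁))
          ⊆ ((G.neighborFinset v).filter (fun u => u ∈ S)).erase u := by
        intro x hx
        rcases Finset.mem_filter.mp hx with ⟨h1, h2⟩
        refine Finset.mem_erase.mpr ⟨fun h => hul₁ (h ▸ h2), Finset.mem_filter.mpr ⟨h1, hl₁S x h2⟩⟩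
      have humem : u ∈ ((G.neighborFinset v).filter (fun u => u ∈ S)) :=
        Finset.mem_filter.mpr ⟨(G.mem_neighborFinset v u).mpr hadj, huS⟩
      calc ((G.neighborFinset v).filter (fun u => u ∈ l₁)).card
          ≤ (((G.neighborFinset v).filter (fun u => u ∈ S)).erase u).card := Finset.card_le_card hsub
        _ < ((G.neighborFinset v).filter (fun u => u ∈ S)).card :=
            Finset.card_erase_lt_of_mem humem
        _ ≤ _ := hcnt v hvS hvy
  obtain ⟨c', hc1, hc2, hc3⟩ := greedy_engine G L ∅ l c (descList_nodup r S)
    (by simp) (fun v hv _ => hm v (fun h => hv (hmeml.mpr h)))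
    (fun u v h hu hv _ _ => hp u v h (fun h' => hu (hmeml.mpr h')) (fun h' => hv (hmeml.mpr h')))
    key
  exact ⟨c', fun v hv => hc1 v (fun h => hv (hmeml.mp h)), fun v => hc2 v (by simp),
    fun u v h => hc3 u v h (by simp) (by simp)⟩

end ColorSet
section Stage1
variable {V : Type*} [Fintype V] [DecidableEq V] (G : SimpleGraph V) [DecidableRel G.Adj]

/-- Stage 1: greedily color everything outside `Bs`, moving towards `Bs`. -/
theorem stage1 (L : V → Finset ℕ) (hL : ∀ v, G.degree v ≤ (L v).card) (hconn : G.Connected)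
    (Bs : Finset V) (hBne : Bs.Nonempty) :
    ∃ c₁ : V → ℕ, (∀ v, v ∉ Bs → c₁ v ∈ L v) ∧
      (∀ u v, G.Adj u v → u ∉ Bs → v ∉ Bs → c₁ u ≠ c₁ v) := by
  classical
  set r : V → ℕ := fun w => (Bs.image (fun b => G.dist w b)).min' (hBne.image _) with hr
  set l : List V := descList r Bsᶜ with hl
  have hmeml : ∀ {x : V}, x ∈ l ↔ x ∉ Bs := by
    intro x; rw [hl, mem_descList, Finset.mem_compl]
  have key : ∀ l₁ v l₂, l = l₁ ++ v :: l₂ →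
      ((G.neighborFinset v).filter (fun u => u ∈ l₁)).card
        < ((L v) \ (((G.neighborFinset v).filter (fun u => u ∉ l ∧ u ∉ Bs)).image
            (fun _ : V => (0:ℕ)))).card := by
    intro l₁ w l₂ hdec
    have hempty : ((G.neighborFinset w).filter (fun u => u ∉ l ∧ u ∉ Bs)) = ∅ := by
      ext x
      simp only [Finset.mem_filter, Finset.notMem_empty, iff_false]
      rintro ⟨_, hx1, hx2⟩
      exact hx1 (hmeml.mpr hx2)
    rw [hempty]
    simp only [Finset.image_empty, Finset.sdiff_empty]
    have hwl : w ∈ l := by rw [hdec]; simp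
    have hwB : w ∉ Bs := hmeml.mp hwl
    -- find the closer neighbor
    obtain ⟨hb', hbmin⟩ : (r w) ∈ Bs.image (fun b => G.dist w b) ∧ True :=
      ⟨Finset.min'_mem _ _, trivial⟩
    obtain ⟨b, hbB, hbd⟩ := Finset.mem_image.mp hb'
    have hwb : w ≠ b := fun h => hwB (h ▸ hbB)
    have hreach : G.Reachable w b := hconn.preconnected w b
    have hdpos : 0 < G.dist w b := hconn.pos_dist_of_ne hwb
    obtain ⟨p, hp⟩ := hreach.exists_walk_length_eq_dist
    have hpne : ¬ p.Nil := by
      intro h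
      rw [SimpleGraph.Walk.nil_iff_length_eq.mp h] at hp
      omega
    obtain ⟨u, hadj, q, hq⟩ : ∃ u, ∃ _ : G.Adj w u, ∃ q : G.Walk u b, p = q.cons ‹_› := by
      cases p with
      | nil => exact absurd SimpleGraph.Walk.Nil.nil hpne
      | cons h q => exact ⟨_, h, q, rfl⟩
    have hqlen : q.length + 1 = G.dist w b := by rw [← hp, hq]; simp
    have hru : r u < r w := by
      have h1 : r u ≤ G.dist u b :=
        Finset.min'_le _ _ (Finset.mem_image.mpr ⟨b, hbB, rfl⟩)
      have h2 : G.dist u b ≤ q.length := SimpleGraph.dist_le q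
      omega
    have hul₁ : u ∉ l₁ := by
      by_cases huB : u ∈ Bs
      · intro h
        exact hmeml.mp (by rw [hdec]; exact List.mem_append.mpr (Or.inl h)) huB
      · have hul : u ∈ Bsᶜ := Finset.mem_compl.mpr huB
        have : u ∈ l₂ := descList_mem_suffix hdec hul hru
        have hnd : (l₁ ++ w :: l₂).Nodup := hdec ▸ descList_nodup r Bsᶜ
        intro h
        exact (List.disjoint_of_nodup_append hnd) h (by simp [this])
    have hsub : ((G.neighborFinset w).filter (fun x => x ∈ l₁)) ⊆ (G.neighborFinset w).erase u := by
      intro x hx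
      rcases Finset.mem_filter.mp hx with ⟨h1, h2⟩
      exact Finset.mem_erase.mpr ⟨fun h => hul₁ (h ▸ h2), h1⟩
    have humem : u ∈ G.neighborFinset w := (G.mem_neighborFinset w u).mpr hadj
    calc ((G.neighborFinset w).filter (fun x => x ∈ l₁)).card
        ≤ ((G.neighborFinset w).erase u).card := Finset.card_le_card hsub
      _ < (G.neighborFinset w).card := Finset.card_erase_lt_of_mem humem
      _ = G.degree w := rfl
      _ ≤ (L w).card := hL w
  obtain ⟨c', hc1, hc2, hc3⟩ := greedy_engine G L Bs l (fun _ => 0) (descList_nodup r Bsᶜ)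
    (fun x hx => by simpa using hmeml.mp hx)
    (fun v hv hvB => absurd (hmeml.mpr hvB) hv)
    (fun u v _ hu hv huB hvB => absurd (hmeml.mpr huB) hu)
    key
  exact ⟨c', hc2, hc3⟩

end Stage1
section Pieces
set_option linter.unusedSectionVars false
variable {V : Type*} [Fintype V] [DecidableEq V] (G : SimpleGraph V) [DecidableRel G.Adj]

/-- A piece of `W`: a nonempty set `A ⊆ W \ {c}` whose only neighbor outside itself
(within `W`) is `c`. -/
def IsPiece (W : Finset V) (c : V) (A : Finset V) : Prop :=
  c ∈ W ∧ A ⊆ W.erase c ∧ A.Nonempty ∧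
    ∀ u ∈ A, ∀ w ∈ W, G.Adj u w → w ∈ A ∨ w = c

theorem surg_aux {W A : Finset V} {c : V}
    (hb : ∀ u ∈ A, ∀ w ∈ W, G.Adj u w → w ∈ A ∨ w = c) (hcW : c ∈ W) (hcA : c ∉ A) :
    ∀ {z : V} (p : G.Walk z c), (∀ x ∈ p.support, x ∈ W) → z ∉ A → DW G ↑(W \ A) z c := by
  intro z p
  induction p with
  | nil =>
    intro _ hzA
    exact DW.refl (by simp [hcW, hcA])
  | @cons z z₁ c h q ih =>
    intro hsup hzA
    have hzW : z ∈ W := hsup z (by simp)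
    have hz₁W : z₁ ∈ W := hsup z₁ (by simp)
    by_cases hz₁A : z₁ ∈ A
    · rcases hb z₁ hz₁A z hzW h.symm with hA | hc
      · exact absurd hA hzA
      · subst hc; exact DW.refl (by simp [hzW, hzA])
    · refine (DW.of_adj h (by simp [hzW, hzA]) (by simp [hz₁W, hz₁A])).trans ?_
      exact ih hb hcW hcA (fun x hx => hsup x (by simp [hx])) hz₁A

/-- Surgery: every vertex of `W` outside a piece can reach the attachment vertex within
`W \ A`. -/
theorem piece_surg {W A : Finset V} {c : V} (hWconn : ∀ u ∈ W, ∀ w ∈ W, DW G ↑W u w)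
    (hp : IsPiece G W c A) : ∀ z ∈ W, z ∉ A → DW G ↑(W \ A) z c := by
  obtain ⟨hcW, hAW, -, hb⟩ := hp
  intro z hz hzA
  obtain ⟨p, hsup⟩ := hWconn z hz c hcW
  exact surg_aux G hb hcW (fun h => by simpa using hAW h) p (fun x hx => by simpa using hsup x hx) hzA

theorem attach_aux {W A : Finset V} {c : V}
    (hb : ∀ u ∈ A, ∀ w ∈ W, G.Adj u w → w ∈ A ∨ w = c) (hcA : c ∉ A) :
    ∀ {z : V} (p : G.Walk z c), (∀ x ∈ p.support, x ∈ W) → z ∈ A → ∃ u ∈ A, G.Adj u c := by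
  intro z p
  induction p with
  | nil => intro _ hzA; exact absurd hzA hcA
  | @cons z z₁ c h q ih =>
    intro hsup hzA
    by_cases hz₁ : z₁ = c
    · exact ⟨z, hzA, hz₁ ▸ h⟩
    · have hz₁W : z₁ ∈ W := hsup z₁ (by simp)
      rcases hb z hzA z₁ hz₁W h with hA | hc
      · exact ih hb hcA (fun x hx => hsup x (by simp [hx])) hA
      · exact absurd hc hz₁

/-- A piece has an edge to its attachment vertex. -/
theorem piece_attach {W A : Finset V} {c : V} (hWconn : ∀ u ∈ W, ∀ w ∈ W, DW G ↑W u w)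
    (hp : IsPiece G W c A) : ∃ u ∈ A, G.Adj u c := by
  obtain ⟨hcW, hAW, ⟨z₀, hz₀⟩, hb⟩ := hp
  have hzW : z₀ ∈ W := Finset.mem_of_mem_erase (hAW hz₀)
  obtain ⟨p, hsup⟩ := hWconn z₀ hzW c hcW
  exact attach_aux G hb (fun h => by simpa using hAW h) p
    (fun x hx => by simpa using hsup x hx) hz₀

/-- Removing a vertex of a minimal piece leaves everything connected to `c`. -/
theorem piece_min_noncut {W R : Finset V} {c : V} {A : Finset V}
    (hWconn : ∀ u ∈ W, ∀ w ∈ W, DW G ↑W u w)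
    (hA : IsPiece G W c A) (hAR : A ⊆ R)
    (hmin : ∀ c' A', IsPiece G W c' A' → A' ⊆ R → A.card ≤ A'.card)
    {a : V} (ha : a ∈ A) :
    ∀ z ∈ W.erase a, DW G ↑(W.erase a) z c := by
  classical
  obtain ⟨hcW, hAW, hAne, hb⟩ := hA
  have hac : a ≠ c := fun h => by simpa [h] using hAW ha
  have haW : a ∈ W := Finset.mem_of_mem_erase (hAW ha)
  set K : Finset V := (W.erase a).filter (fun z => DW G ↑(W.erase a) z c) with hK
  have hcK : c ∈ K :=
    Finset.mem_filter.mpr ⟨Finset.mem_erase.mpr ⟨hac.symm, hcW⟩,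
      DW.refl (by simp [hcW, hac.symm])⟩
  have hWAK : ∀ z ∈ W, z ∉ A → z ∈ K := by
    intro z hz hzA
    have hsub : (W \ A : Finset V) ⊆ W.erase a := by
      intro t ht
      rcases Finset.mem_sdiff.mp ht with ⟨h1, h2⟩
      exact Finset.mem_erase.mpr ⟨fun h => h2 (h ▸ ha), h1⟩
    refine Finset.mem_filter.mpr ⟨Finset.mem_erase.mpr ⟨fun h => hzA (h ▸ ha), hz⟩, ?_⟩
    exact (piece_surg G hWconn ⟨hcW, hAW, hAne, hb⟩ z hz hzA).mono (by exact_mod_cast hsub)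
  set A₃ : Finset V := (W.erase a) \ K with hA₃
  have hA₃A : A₃ ⊆ A := by
    intro z hz
    rcases Finset.mem_sdiff.mp hz with ⟨h1, h2⟩
    by_contra hzA
    exact h2 (hWAK z (Finset.mem_of_mem_erase h1) hzA)
  have hA₃empty : A₃ = ∅ := by
    by_contra hne
    have hA₃ne : A₃.Nonempty := Finset.nonempty_of_ne_empty hne
    have hpiece : IsPiece G W a A₃ := by
      refine ⟨haW, ?_, hA₃ne, ?_⟩
      · intro z hz
        exact (Finset.mem_sdiff.mp hz).1
      · intro u hu w hwW hadj
        by_cases hwa : w = a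
        · exact Or.inr hwa
        · left
          have hwW' : w ∈ W.erase a := Finset.mem_erase.mpr ⟨hwa, hwW⟩
          rcases Finset.mem_sdiff.mp hu with ⟨hu1, hu2⟩
          by_cases hwK : w ∈ K
          · exfalso
            apply hu2
            refine Finset.mem_filter.mpr ⟨hu1, ?_⟩
            exact (DW.of_adj hadj (by simp [Finset.mem_erase.mp hu1]) (by simp [Finset.mem_erase.mp hwW'])).trans
              (Finset.mem_filter.mp hwK).2
          · exact Finset.mem_sdiff.mpr ⟨hwW', hwK⟩
    have hcard := hmin a A₃ hpiece (hA₃A.trans hAR)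
    have hlt : A₃.card < A.card := by
      apply Finset.card_lt_card
      refine ⟨hA₃A, fun hsub => ?_⟩
      have : a ∈ A₃ := hsub ha
      exact (Finset.mem_erase.mp (Finset.mem_sdiff.mp this).1).1 rfl
    omega
  intro z hz
  have hzK : z ∈ K := by
    by_contra h
    have : z ∈ A₃ := Finset.mem_sdiff.mpr ⟨hz, h⟩
    rw [hA₃empty] at this
    simp at this
  exact (Finset.mem_filter.mp hzK).2

/-- Removing one vertex from each of two minimal pieces in separated regions leaves
everything connected to `c₂`. -/
theorem piece_min_noncut2 {W R₁ R₂ : Finset V} {c₁ c₂ : V} {A₁ A₂ : Finset V}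
    (hWconn : ∀ u ∈ W, ∀ w ∈ W, DW G ↑W u w)
    (hA₁ : IsPiece G W c₁ A₁) (hA₁R : A₁ ⊆ R₁)
    (hmin₁ : ∀ c' A', IsPiece G W c' A' → A' ⊆ R₁ → A₁.card ≤ A'.card)
    (hA₂ : IsPiece G W c₂ A₂) (hA₂R : A₂ ⊆ R₂)
    (hmin₂ : ∀ c' A', IsPiece G W c' A' → A' ⊆ R₂ → A₂.card ≤ A'.card)
    (hnoedge : ∀ u ∈ R₁, ∀ w ∈ R₂, ¬ G.Adj u w)
    (hdisj : ∀ u ∈ R₁, u ∉ R₂)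
    (hc₂ : c₂ ∉ R₁)
    {a b : V} (ha : a ∈ A₁) (hb : b ∈ A₂) :
    ∀ z ∈ (W.erase a).erase b, DW G ↑((W.erase a).erase b) z c₂ := by
  classical
  set W' : Finset V := W.erase a with hW'
  have hW'conn : ∀ u ∈ W', ∀ w ∈ W', DW G ↑W' u w := by
    intro u hu w hw
    exact (piece_min_noncut G hWconn hA₁ hA₁R hmin₁ ha u hu).trans
      ((piece_min_noncut G hWconn hA₁ hA₁R hmin₁ ha w hw).symm)
  obtain ⟨hc₂W, hA₂W, hA₂ne, hb₂⟩ := hA₂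
  have haR₁ : a ∈ R₁ := hA₁R ha
  have hc₂a : c₂ ≠ a := fun h => hc₂ (h ▸ haR₁)
  have haA₂ : a ∉ A₂ := fun h => hdisj a haR₁ (hA₂R h)
  have hbc₂ : b ≠ c₂ := (Finset.mem_erase.mp (hA₂W hb)).1
  have hpiece' : IsPiece G W' c₂ A₂ := by
    refine ⟨Finset.mem_erase.mpr ⟨hc₂a, hc₂W⟩, ?_, hA₂ne, ?_⟩
    · intro z hz
      have h1 := Finset.mem_erase.mp (hA₂W hz)
      exact Finset.mem_erase.mpr ⟨h1.1,
        Finset.mem_erase.mpr ⟨fun h => haA₂ (h ▸ hz), h1.2⟩⟩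
    · intro u hu w hwW' hadj
      exact hb₂ u hu w (Finset.mem_of_mem_erase hwW') hadj
  set K : Finset V := (W'.erase b).filter (fun z => DW G ↑(W'.erase b) z c₂) with hK
  have hc₂K : c₂ ∈ K := by
    have hmem : c₂ ∈ W'.erase b := Finset.mem_erase.mpr ⟨fun h => hbc₂ h.symm,
      Finset.mem_erase.mpr ⟨hc₂a, hc₂W⟩⟩
    exact Finset.mem_filter.mpr ⟨hmem, DW.refl (by simp [Finset.mem_erase.mp hmem])⟩
  have hWAK : ∀ z ∈ W', z ∉ A₂ → z ∈ K := by
    intro z hz hzA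
    have hsub : (W' \ A₂ : Finset V) ⊆ W'.erase b := by
      intro t ht
      rcases Finset.mem_sdiff.mp ht with ⟨h1, h2⟩
      exact Finset.mem_erase.mpr ⟨fun h => h2 (h ▸ hb), h1⟩
    refine Finset.mem_filter.mpr ⟨Finset.mem_erase.mpr ⟨fun h => hzA (h ▸ hb), hz⟩, ?_⟩
    exact (piece_surg G hW'conn hpiece' z hz hzA).mono (by exact_mod_cast hsub)
  set A₃ : Finset V := (W'.erase b) \ K with hA₃
  have hA₃A : A₃ ⊆ A₂ := by
    intro z hz
    rcases Finset.mem_sdiff.mp hz with ⟨h1, h2⟩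
    by_contra hzA
    exact h2 (hWAK z (Finset.mem_of_mem_erase h1) hzA)
  have hbW : b ∈ W := Finset.mem_of_mem_erase (hA₂W hb)
  have hA₃empty : A₃ = ∅ := by
    by_contra hne
    have hA₃ne : A₃.Nonempty := Finset.nonempty_of_ne_empty hne
    have hpiece3 : IsPiece G W b A₃ := by
      refine ⟨hbW, ?_, hA₃ne, ?_⟩
      · intro z hz
        have h1 := Finset.mem_sdiff.mp hz
        exact Finset.mem_erase.mpr ⟨(Finset.mem_erase.mp h1.1).1,
          Finset.mem_of_mem_erase (Finset.mem_of_mem_erase h1.1)⟩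
      · intro u hu w hwW hadj
        by_cases hwb : w = b
        · exact Or.inr hwb
        · left
          have huA₂ : u ∈ A₂ := hA₃A hu
          have hwa : w ≠ a := by
            intro h
            exact hnoedge a haR₁ u (hA₂R huA₂) (h ▸ hadj.symm)
          have hwW' : w ∈ W'.erase b :=
            Finset.mem_erase.mpr ⟨hwb, Finset.mem_erase.mpr ⟨hwa, hwW⟩⟩
          rcases Finset.mem_sdiff.mp hu with ⟨hu1, hu2⟩
          by_cases hwK : w ∈ K
          · exfalso
            apply hu2
            refine Finset.mem_filter.mpr ⟨hu1, ?_⟩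
            exact (DW.of_adj hadj (by simp [Finset.mem_erase.mp hu1]) (by simp [Finset.mem_erase.mp hwW'])).trans
              (Finset.mem_filter.mp hwK).2
          · exact Finset.mem_sdiff.mpr ⟨hwW', hwK⟩
    have hcard := hmin₂ b A₃ hpiece3 (hA₃A.trans hA₂R)
    have hlt : A₃.card < A₂.card := by
      apply Finset.card_lt_card
      refine ⟨hA₃A, fun hsub => ?_⟩
      have : b ∈ A₃ := hsub hb
      exact (Finset.mem_erase.mp (Finset.mem_sdiff.mp this).1).1 rfl
    omega
  intro z hz
  have hzK : z ∈ K := by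
    by_contra h
    have : z ∈ A₃ := Finset.mem_sdiff.mpr ⟨hz, h⟩
    rw [hA₃empty] at this
    simp at this
  exact (Finset.mem_filter.mp hzK).2

end Pieces
section Triple
set_option linter.unusedSectionVars false
set_option maxHeartbeats 1000000
variable {V : Type*} [Fintype V] [DecidableEq V] (G : SimpleGraph V) [DecidableRel G.Adj]

theorem sdiff_pair (Bs : Finset V) (a b : V) :
    Bs \ ({a, b} : Finset V) = (Bs.erase a).erase b := by
  ext t; simp [Finset.mem_erase, and_comm]; tauto

theorem no_attach_aux {Bs A : Finset V} {c₁ x : V}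
    (hb : ∀ u ∈ A, ∀ w ∈ Bs.erase x, G.Adj u w → w ∈ A ∨ w = c₁)
    (hxA : x ∉ A) (hnonbr : ∀ u ∈ A, ¬ G.Adj x u) :
    ∀ {z : V} (p : G.Walk z x), (∀ v ∈ p.support, v ∈ Bs.erase c₁) → z ∈ A → False := by
  intro z p
  induction p with
  | nil => intro _ hzA; exact hxA hzA
  | @cons z z₁ x h q ih =>
    intro hsup hzA
    by_cases hz₁x : z₁ = x
    · exact hnonbr z hzA (hz₁x ▸ h).symm
    · have hz₁ : z₁ ∈ Bs.erase c₁ := hsup z₁ (by simp)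
      have hz₁' : z₁ ∈ Bs.erase x :=
        Finset.mem_erase.mpr ⟨hz₁x, Finset.mem_of_mem_erase hz₁⟩
      rcases hb z hzA z₁ hz₁' h with hA | hc
      · exact ih hb hxA hnonbr (fun v hv => hsup v (by simp [hv])) hA
      · exact (Finset.mem_erase.mp hz₁).1 hc

theorem exists_triple (Bs : Finset V)
    (hconnB : ∀ u ∈ Bs, ∀ w ∈ Bs, DW G ↑Bs u w)
    (hncv : ∀ v ∈ Bs, ∀ u ∈ Bs.erase v, ∀ w ∈ Bs.erase v, DW G ↑(Bs.erase v) u w)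
    (hdeg3 : ∀ v ∈ Bs, 3 ≤ ((G.neighborFinset v).filter (· ∈ Bs)).card)
    (x₀ z₀ : V) (hx₀ : x₀ ∈ Bs) (hz₀ : z₀ ∈ Bs) (hxz₀ : x₀ ≠ z₀) (hnadj₀ : ¬ G.Adj x₀ z₀) :
    ∃ y a b : V, y ∈ Bs ∧ a ∈ Bs ∧ b ∈ Bs ∧ G.Adj y a ∧ G.Adj y b ∧ a ≠ b ∧ ¬ G.Adj a b ∧
      (∀ w ∈ Bs \ ({a, b} : Finset V), DW G ↑(Bs \ ({a, b} : Finset V)) w y) := by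
  classical
  by_cases hcase : ∀ a ∈ Bs, ∀ b ∈ Bs, ∀ u ∈ Bs \ ({a,b} : Finset V),
      ∀ w ∈ Bs \ ({a,b} : Finset V), DW G ↑(Bs \ ({a,b} : Finset V)) u w
  · -- 3-connected-ish case: find an induced path of length 2 along a shortest walk
    set F : Set ℕ := {n | ∃ p : G.Walk x₀ z₀, p.length = n ∧ ∀ v ∈ p.support, (v : V) ∈ Bs}
      with hF
    have hFne : F.Nonempty := by
      obtain ⟨p, hp⟩ := hconnB x₀ hx₀ z₀ hz₀
      exact ⟨p.length, p, rfl, fun v hv => by simpa using hp v hv⟩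
    obtain ⟨p, hplen, hpsup⟩ := Nat.sInf_mem hFne
    cases p with
    | nil => exact absurd rfl hxz₀
    | cons h₁ q₁ =>
      rename_i y
      cases q₁ with
      | nil => exact absurd h₁ hnadj₀
      | cons h₂ q₂ =>
        rename_i b
        have hyB : y ∈ Bs := hpsup y (by simp)
        have hbB : b ∈ Bs := hpsup b (by simp)
        have hq₂sup : ∀ v ∈ q₂.support, v ∈ Bs := fun v hv => hpsup v (by simp [hv])
        have hxb : x₀ ≠ b := by
          rintro rfl
          have : sInf F ≤ q₂.length := Nat.sInf_le ⟨q₂, rfl, hq₂sup⟩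
          rw [← hplen] at this
          simp only [SimpleGraph.Walk.length_cons] at this
          omega
        have hnadjxb : ¬ G.Adj x₀ b := by
          intro hadj
          have : sInf F ≤ q₂.length + 1 :=
            Nat.sInf_le ⟨SimpleGraph.Walk.cons hadj q₂, by simp,
              fun v hv => by
                simp only [SimpleGraph.Walk.support_cons, List.mem_cons] at hv
                rcases hv with rfl | hv
                · exact hx₀
                · exact hq₂sup v hv⟩
          rw [← hplen] at this
          simp only [SimpleGraph.Walk.length_cons] at this
          omega
        refine ⟨y, x₀, b, hyB, hx₀, hbB, h₁.symm, h₂, hxb, hnadjxb, ?_⟩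
        intro w hw
        have hyS : y ∈ Bs \ ({x₀, b} : Finset V) := by
          simp only [Finset.mem_sdiff, Finset.mem_insert, Finset.mem_singleton]
          exact ⟨hyB, by push_neg; exact ⟨h₁.ne', h₂.ne⟩⟩
        exact hcase x₀ hx₀ b hbB w hw y hyS
  · -- there is a cutting pair
    push_neg at hcase
    obtain ⟨a₀, ha₀B, b₀, hb₀B, u₀, hu₀, w₀, hw₀, hbroken⟩ := hcase
    have ha₀b₀ : a₀ ≠ b₀ := by
      rintro rfl
      have hEq : Bs \ ({a₀, a₀} : Finset V) = Bs.erase a₀ := by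
        ext t; simp [Finset.mem_erase, and_comm]
      rw [hEq] at hu₀ hw₀ hbroken
      exact hbroken (hncv a₀ ha₀B u₀ hu₀ w₀ hw₀)
    set H : Finset V := Bs.erase a₀ with hH
    have hHconn : ∀ u ∈ H, ∀ w ∈ H, DW G ↑H u w := hncv a₀ ha₀B
    have hEq2 : Bs \ ({a₀, b₀} : Finset V) = H.erase b₀ := by
      rw [sdiff_pair]
    rw [hEq2] at hu₀ hw₀ hbroken
    have hb₀H : b₀ ∈ H := Finset.mem_erase.mpr ⟨fun h => ha₀b₀ h.symm, hb₀B⟩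
    -- the two components
    set Au : Finset V := (H.erase b₀).filter (fun t => DW G ↑(H.erase b₀) u₀ t) with hAu
    set Aw : Finset V := (H.erase b₀).filter (fun t => DW G ↑(H.erase b₀) w₀ t) with hAw
    have hu₀Au : u₀ ∈ Au := Finset.mem_filter.mpr ⟨hu₀, DW.refl (Finset.mem_coe.mpr hu₀)⟩
    have hw₀Aw : w₀ ∈ Aw := Finset.mem_filter.mpr ⟨hw₀, DW.refl (Finset.mem_coe.mpr hw₀)⟩
    have hdisj : ∀ t ∈ Au, t ∉ Aw := by
      intro t ht htw
      exact hbroken (((Finset.mem_filter.mp ht).2).trans ((Finset.mem_filter.mp htw).2).symm)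
    have hnoedge : ∀ u ∈ Au, ∀ w ∈ Aw, ¬ G.Adj u w := by
      intro u hu w hw hadj
      apply hdisj w ?_ hw
      refine Finset.mem_filter.mpr ⟨(Finset.mem_filter.mp hw).1, ?_⟩
      exact ((Finset.mem_filter.mp hu).2).trans
        (DW.of_adj hadj (Finset.mem_coe.mpr (Finset.mem_filter.mp hu).1)
          (Finset.mem_coe.mpr (Finset.mem_filter.mp hw).1))
    have hpieceAu : IsPiece G H b₀ Au := by
      refine ⟨hb₀H, Finset.filter_subset _ _, ⟨u₀, hu₀Au⟩, ?_⟩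
      intro u hu w hwH hadj
      by_cases hwb : w = b₀
      · exact Or.inr hwb
      · left
        have hw' : w ∈ H.erase b₀ := Finset.mem_erase.mpr ⟨hwb, hwH⟩
        refine Finset.mem_filter.mpr ⟨hw', ?_⟩
        exact ((Finset.mem_filter.mp hu).2).trans
          (DW.of_adj hadj (Finset.mem_coe.mpr (Finset.mem_filter.mp hu).1) (Finset.mem_coe.mpr hw'))
    have hpieceAw : IsPiece G H b₀ Aw := by
      refine ⟨hb₀H, Finset.filter_subset _ _, ⟨w₀, hw₀Aw⟩, ?_⟩
      intro u hu w hwH hadj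
      by_cases hwb : w = b₀
      · exact Or.inr hwb
      · left
        have hw' : w ∈ H.erase b₀ := Finset.mem_erase.mpr ⟨hwb, hwH⟩
        refine Finset.mem_filter.mpr ⟨hw', ?_⟩
        exact ((Finset.mem_filter.mp hu).2).trans
          (DW.of_adj hadj (Finset.mem_coe.mpr (Finset.mem_filter.mp hu).1) (Finset.mem_coe.mpr hw'))
    -- minimal pieces inside Au and Aw
    set F₁ : Set ℕ := {n | ∃ c' A', IsPiece G H c' A' ∧ A' ⊆ Au ∧ A'.card = n} with hF₁
    have hF₁ne : F₁.Nonempty := ⟨Au.card, b₀, Au, hpieceAu, Finset.Subset.refl _, rfl⟩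
    obtain ⟨c₁, A₁, hp₁, hsub₁, hcard₁⟩ := Nat.sInf_mem hF₁ne
    have hmin₁ : ∀ c' A', IsPiece G H c' A' → A' ⊆ Au → A₁.card ≤ A'.card := by
      intro c' A' hp' hs'
      rw [hcard₁]
      exact Nat.sInf_le ⟨c', A', hp', hs', rfl⟩
    set F₂ : Set ℕ := {n | ∃ c' A', IsPiece G H c' A' ∧ A' ⊆ Aw ∧ A'.card = n} with hF₂
    have hF₂ne : F₂.Nonempty := ⟨Aw.card, b₀, Aw, hpieceAw, Finset.Subset.refl _, rfl⟩
    obtain ⟨c₂, A₂, hp₂, hsub₂, hcard₂⟩ := Nat.sInf_mem hF₂ne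
    have hmin₂ : ∀ c' A', IsPiece G H c' A' → A' ⊆ Aw → A₂.card ≤ A'.card := by
      intro c' A' hp' hs'
      rw [hcard₂]
      exact Nat.sInf_le ⟨c', A', hp', hs', rfl⟩
    -- a₀ has a neighbor in any piece of H
    have hattach : ∀ (c' : V) (A' : Finset V), IsPiece G H c' A' → ∃ t ∈ A', G.Adj a₀ t := by
      intro c' A' hp'
      by_contra hno
      push_neg at hno
      obtain ⟨hc'H, hA'H, ⟨t₀, ht₀⟩, hb'⟩ := hp'
      have hc'B : c' ∈ Bs := Finset.mem_of_mem_erase hc'H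
      have hc'a₀ : c' ≠ a₀ := (Finset.mem_erase.mp hc'H).1
      have ht₀' : t₀ ∈ Bs.erase c' := by
        have h1 := Finset.mem_erase.mp (hA'H ht₀)
        have h2 := Finset.mem_erase.mp h1.2
        exact Finset.mem_erase.mpr ⟨h1.1, Finset.mem_of_mem_erase h1.2⟩
      have ha₀' : a₀ ∈ Bs.erase c' := Finset.mem_erase.mpr ⟨fun h => hc'a₀ h.symm, ha₀B⟩
      obtain ⟨p, hpsup⟩ := hncv c' hc'B t₀ ht₀' a₀ ha₀'
      exact no_attach_aux G hb'
        (fun h => (Finset.mem_erase.mp (Finset.mem_of_mem_erase (hA'H h))).1 rfl) hno p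
        (fun v hv => Finset.mem_coe.mp (hpsup v hv)) ht₀
    obtain ⟨a, haA₁, hadja⟩ := hattach c₁ A₁ hp₁
    obtain ⟨b, hbA₂, hadjb⟩ := hattach c₂ A₂ hp₂
    have haAu : a ∈ Au := hsub₁ haA₁
    have hbAw : b ∈ Aw := hsub₂ hbA₂
    have hab : a ≠ b := fun h => hdisj a haAu (h ▸ hbAw)
    have hnadjab : ¬ G.Adj a b := hnoedge a haAu b hbAw
    have hc₂Au : c₂ ∉ Au := by
      intro hc
      obtain ⟨t, htA₂, hadjt⟩ := piece_attach G hHconn hp₂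
      exact hnoedge c₂ hc t (hsub₂ htA₂) hadjt.symm
    have hconc := piece_min_noncut2 G hHconn hp₁ hsub₁ hmin₁ hp₂ hsub₂ hmin₂
      hnoedge hdisj hc₂Au haA₁ hbA₂
    -- a third neighbor of a₀
    have hthird : ∃ t, G.Adj a₀ t ∧ t ∈ Bs ∧ t ≠ a ∧ t ≠ b := by
      by_contra hno
      push_neg at hno
      have hsub : ((G.neighborFinset a₀).filter (· ∈ Bs)) ⊆ ({a, b} : Finset V) := by
        intro t ht
        rcases Finset.mem_filter.mp ht with ⟨h1, h2⟩
        have := hno t ((G.mem_neighborFinset a₀ t).mp h1) h2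
        by_contra hmem
        simp only [Finset.mem_insert, Finset.mem_singleton] at hmem
        push_neg at hmem
        exact hmem.2 (this hmem.1)
      have h3 := hdeg3 a₀ ha₀B
      have := Finset.card_le_card hsub
      have h2 : ({a, b} : Finset V).card ≤ 2 := Finset.card_insert_le _ _ |>.trans (by simp)
      omega
    obtain ⟨z, hadjz, hzB, hza, hzb⟩ := hthird
    -- assemble
    have haB : a ∈ Bs := Finset.mem_of_mem_erase
      ((hp₁.2.1.trans (Finset.erase_subset _ _)) haA₁)
    have hbB : b ∈ Bs := Finset.mem_of_mem_erase
      ((hp₂.2.1.trans (Finset.erase_subset _ _)) hbA₂)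
    have ha₀a : a₀ ≠ a := hadja.ne
    have ha₀b : a₀ ≠ b := hadjb.ne
    have ha₀S : a₀ ∈ Bs \ ({a, b} : Finset V) := by
      simp only [Finset.mem_sdiff, Finset.mem_insert, Finset.mem_singleton]
      exact ⟨ha₀B, by push_neg; exact ⟨ha₀a, ha₀b⟩⟩
    have hsubS : ((H.erase a).erase b : Finset V) ⊆ Bs \ ({a, b} : Finset V) := by
      intro t ht
      have h1 := Finset.mem_erase.mp ht
      have h2 := Finset.mem_erase.mp h1.2
      simp only [Finset.mem_sdiff, Finset.mem_insert, Finset.mem_singleton]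
      exact ⟨Finset.mem_of_mem_erase h2.2, by push_neg; exact ⟨h2.1, h1.1⟩⟩
    have hzH : z ∈ (H.erase a).erase b := by
      refine Finset.mem_erase.mpr ⟨hzb, Finset.mem_erase.mpr ⟨hza, ?_⟩⟩
      exact Finset.mem_erase.mpr ⟨hadjz.ne', hzB⟩
    have hzS : z ∈ Bs \ ({a, b} : Finset V) := hsubS hzH
    refine ⟨a₀, a, b, ha₀B, haB, hbB, hadja, hadjb, hab, hnadjab, ?_⟩
    intro w hw
    by_cases hwa₀ : w = a₀
    · subst hwa₀
      exact DW.refl (Finset.mem_coe.mpr ha₀S)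
    · have hwHab : w ∈ (H.erase a).erase b := by
        simp only [Finset.mem_sdiff, Finset.mem_insert, Finset.mem_singleton] at hw
        push_neg at hw
        exact Finset.mem_erase.mpr ⟨hw.2.2, Finset.mem_erase.mpr ⟨hw.2.1,
          Finset.mem_erase.mpr ⟨hwa₀, hw.1⟩⟩⟩
      have h1 : DW G ↑((H.erase a).erase b) w z :=
        (hconc w hwHab).trans ((hconc z hzH).symm)
      have h2 : DW G ↑(Bs \ ({a, b} : Finset V)) w z := h1.mono (by exact_mod_cast hsubS)
      exact h2.trans (DW.of_adj hadjz.symm (Finset.mem_coe.mpr hzS) (Finset.mem_coe.mpr ha₀S))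
end Triple
section Cycle
set_option linter.unusedSectionVars false
set_option maxHeartbeats 1600000
variable {V : Type*} [Fintype V] [DecidableEq V] (G : SimpleGraph V) [DecidableRel G.Adj]

/-- The other neighbor (within `Bs`) of `v`, different from `u`. -/
noncomputable def nextv (Bs : Finset V) (u v : V) : V :=
  if h : (((G.neighborFinset v).filter (· ∈ Bs)).erase u).Nonempty then h.choose else v

theorem nextv_spec {Bs : Finset V} {u v : V}
    (h2 : ((G.neighborFinset v).filter (· ∈ Bs)).card = 2)
    (hu : u ∈ (G.neighborFinset v).filter (· ∈ Bs)) :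
    nextv G Bs u v ∈ (G.neighborFinset v).filter (· ∈ Bs) ∧ nextv G Bs u v ≠ u ∧
      ∀ w ∈ (G.neighborFinset v).filter (· ∈ Bs), w ≠ u → w = nextv G Bs u v := by
  classical
  have hcard : (((G.neighborFinset v).filter (· ∈ Bs)).erase u).card = 1 := by
    rw [Finset.card_erase_of_mem hu, h2]
  obtain ⟨x, hx⟩ := Finset.card_eq_one.mp hcard
  have hne : (((G.neighborFinset v).filter (· ∈ Bs)).erase u).Nonempty := by
    rw [hx]; exact ⟨x, by simp⟩
  have hval : nextv G Bs u v = x := by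
    have h5 : nextv G Bs u v ∈ ((G.neighborFinset v).filter (· ∈ Bs)).erase u := by
      rw [nextv, dif_pos hne]; exact hne.choose_spec
    rw [hx] at h5
    simpa using h5
  rw [hval]
  have hxmem : x ∈ ((G.neighborFinset v).filter (· ∈ Bs)).erase u := by rw [hx]; simp
  refine ⟨Finset.mem_of_mem_erase hxmem, (Finset.mem_erase.mp hxmem).1, ?_⟩
  intro w hw hwu
  have : w ∈ ((G.neighborFinset v).filter (· ∈ Bs)).erase u := Finset.mem_erase.mpr ⟨hwu, hw⟩
  rw [hx] at this
  simpa using this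

/-- The walking sequence around a 2-regular graph. -/
noncomputable def cycSeq (Bs : Finset V) (v₀ v₁ : V) : ℕ → V × V
  | 0 => (v₀, v₁)
  | (k+1) => ((cycSeq Bs v₀ v₁ k).2, nextv G Bs (cycSeq Bs v₀ v₁ k).1 (cycSeq Bs v₀ v₁ k).2)

theorem closed_reach {E Bs : Finset V}
    (hclosed : ∀ u ∈ E, ∀ w ∈ Bs, G.Adj u w → w ∈ E) :
    ∀ {z t : V} (p : G.Walk z t), (∀ v ∈ p.support, v ∈ Bs) → z ∈ E → t ∈ E := by
  intro z t p
  induction p with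
  | nil => exact fun _ h => h
  | @cons z z₁ t h q ih =>
    intro hsup hz
    exact ih (fun v hv => hsup v (by simp [hv]))
      (hclosed z hz z₁ (hsup z₁ (by simp)) h)

theorem two_regular_cycle (Bs : Finset V)
    (hconnB : ∀ u ∈ Bs, ∀ w ∈ Bs, DW G ↑Bs u w)
    (hBne : Bs.Nonempty)
    (h2 : ∀ v ∈ Bs, ((G.neighborFinset v).filter (· ∈ Bs)).card = 2) :
    ∃ n : ℕ, n = Bs.card ∧ 3 ≤ n ∧
      Nonempty ((G.induce (↑Bs : Set V)) ≃g SimpleGraph.cycleGraph n) ∧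
      (¬ Odd n → ∃ g : V → Bool, ∀ u ∈ Bs, ∀ w ∈ Bs, G.Adj u w → g u ≠ g w) := by
  classical
  obtain ⟨v₀, hv₀⟩ := hBne
  set nbrsB : V → Finset V := fun v => (G.neighborFinset v).filter (· ∈ Bs) with hnbrsB
  have hv₁ne : (nbrsB v₀).Nonempty := by
    apply Finset.card_pos.mp; rw [h2 v₀ hv₀]; omega
  set v₁ : V := hv₁ne.choose with hv₁def
  have hv₁mem : v₁ ∈ nbrsB v₀ := hv₁ne.choose_spec
  set h : ℕ → V := fun k => (cycSeq G Bs v₀ v₁ k).1 with hh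
  have hstep : ∀ k, h (k+1) = (cycSeq G Bs v₀ v₁ k).2 := by
    intro k; rw [hh]; rfl
  have hstep2 : ∀ k, h (k+2) = nextv G Bs (h k) (h (k+1)) := by
    intro k; rfl
  have hmemB : ∀ k, h k ∈ Bs ∧ h (k+1) ∈ nbrsB (h k) ∧ h k ∈ nbrsB (h (k+1)) := by
    intro k
    induction k with
    | zero =>
      refine ⟨hv₀, by rw [hstep 0]; exact hv₁mem, ?_⟩
      rw [hstep 0]
      have hadj : G.Adj v₀ v₁ := by
        have := (Finset.mem_filter.mp hv₁mem).1
        exact (G.mem_neighborFinset v₀ v₁).mp this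
      show v₀ ∈ nbrsB v₁
      exact Finset.mem_filter.mpr ⟨(G.mem_neighborFinset v₁ v₀).mpr hadj.symm, hv₀⟩
    | succ k ihk =>
      obtain ⟨h1, h2', h3⟩ := ihk
      have hk1B : h (k+1) ∈ Bs := (Finset.mem_filter.mp h2').2
      have hspec := nextv_spec G (h2 _ hk1B) h3
      rw [← hstep2 k] at hspec
      refine ⟨hk1B, hspec.1, ?_⟩
      have hadj : G.Adj (h (k+1)) (h (k+2)) :=
        (G.mem_neighborFinset _ _).mp (Finset.mem_filter.mp hspec.1).1
      exact Finset.mem_filter.mpr ⟨(G.mem_neighborFinset _ _).mpr hadj.symm, hk1B⟩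
  have hB : ∀ k, h k ∈ Bs := fun k => (hmemB k).1
  have hadjc : ∀ k, G.Adj (h k) (h (k+1)) := fun k =>
    (G.mem_neighborFinset _ _).mp (Finset.mem_filter.mp (hmemB k).2.1).1
  have hne2 : ∀ k, h (k+2) ≠ h k := by
    intro k
    have hk1B : h (k+1) ∈ Bs := hB (k+1)
    have hspec := nextv_spec G (h2 _ hk1B) (hmemB k).2.2
    rw [← hstep2 k] at hspec
    exact hspec.2.1
  have huniq : ∀ k w, w ∈ nbrsB (h (k+1)) → w ≠ h k → w = h (k+2) := by
    intro k w hw hwk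
    have hk1B : h (k+1) ∈ Bs := hB (k+1)
    have hspec := nextv_spec G (h2 _ hk1B) (hmemB k).2.2
    rw [← hstep2 k] at hspec
    exact hspec.2.2 w hw hwk
  -- the first repeat
  set n : ℕ := Bs.card with hn
  have hPex : ∃ m, 0 < m ∧ ∃ j, j < m ∧ h j = h m := by
    have hmaps : ∀ i ∈ (Finset.range (n+1)), h i ∈ Bs := fun i _ => hB i
    have hlt : Bs.card < (Finset.range (n+1)).card := by simp; omega
    obtain ⟨i, hi, j, hj, hij, heq⟩ :=
      Finset.exists_ne_map_eq_of_card_lt_of_maps_to hlt hmaps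
    rcases Nat.lt_or_ge i j with hlt' | hge
    · exact ⟨j, by omega, i, hlt', heq⟩
    · have : j < i := by omega
      exact ⟨i, by omega, j, this, heq.symm⟩
  set m : ℕ := Nat.find hPex with hm
  obtain ⟨hmpos, j₀, hj₀m, hj₀eq⟩ := Nat.find_spec hPex
  rw [← hm] at hmpos hj₀m hj₀eq
  have hinj : ∀ i j, i < j → j < m → h i ≠ h j := by
    intro i j hij hjm heq
    exact Nat.find_min hPex hjm ⟨by omega, i, hij, heq⟩
  -- first repeat closes the cycle : j₀ = 0
  have hm1 : m ≠ 1 := by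
    intro h1
    rw [h1] at hj₀m hj₀eq
    interval_cases j₀
    exact (hadjc 0).ne hj₀eq
  have hm2 : m ≠ 2 := by
    intro h1
    rw [h1] at hj₀m hj₀eq
    interval_cases j₀
    · exact hne2 0 hj₀eq.symm
    · exact (hadjc 1).ne hj₀eq
  have hm3 : 3 ≤ m := by omega
  have hinj' : ∀ i j, i < m → j < m → h i = h j → i = j := by
    intro i j him hjm heq
    rcases Nat.lt_trichotomy i j with hc | hc | hc
    · exact absurd heq (hinj i j hc hjm)
    · exact hc
    · exact absurd heq.symm (hinj j i hc him)
  have hj₀0 : j₀ = 0 := by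
    by_contra hj₀
    have hj₀1 : 1 ≤ j₀ := by omega
    have hj₀m2 : j₀ ≤ m - 2 := by
      have hne : j₀ ≠ m - 1 := by
        intro hEq
        have hne' := (hadjc (m-1)).ne
        rw [show (m-1)+1 = m by omega] at hne'
        exact hne' (hEq ▸ hj₀eq)
      omega
    have hmem : h (m-1) ∈ nbrsB (h j₀) := by
      rw [hj₀eq]
      have := (hmemB (m-1)).2.2
      rw [show (m-1)+1 = m by omega] at this
      exact this
    by_cases hc : h (m-1) = h (j₀ - 1)
    · exact hinj (j₀ - 1) (m-1) (by omega) (by omega) hc.symm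
    · have hmem' : h (m-1) ∈ nbrsB (h ((j₀ - 1) + 1)) := by
        rw [show j₀ - 1 + 1 = j₀ by omega]; exact hmem
      have heq2 := huniq (j₀ - 1) (h (m-1)) hmem' hc
      rw [show j₀ - 1 + 2 = j₀ + 1 by omega] at heq2
      by_cases hc2 : j₀ + 1 = m - 1
      · have : h (j₀ + 2) = h j₀ := by
          rw [show j₀ + 2 = m by omega, ← hj₀eq]
        exact hne2 j₀ this
      · exact hinj (j₀ + 1) (m - 1) (by omega) (by omega) heq2.symm
  rw [hj₀0] at hj₀eq
  -- hj₀eq : h 0 = h m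
  -- index arithmetic helpers
  set previ : ℕ → ℕ := fun i => if i = 0 then m - 1 else i - 1 with hpre
  set nexti : ℕ → ℕ := fun i => (i + 1) % m with hnex
  have hprelt : ∀ i, i < m → previ i < m := by intro i him; simp only [hpre]; split_ifs <;> omega
  have hnexlt : ∀ i, nexti i < m := fun i => Nat.mod_lt _ (by omega)
  have hnbrs_eq : ∀ i, i < m → nbrsB (h i) = {h (previ i), h (nexti i)} := by
    intro i him
    have hnextmem : h (nexti i) ∈ nbrsB (h i) := by
      by_cases hc : i = m - 1
      · have : nexti i = 0 := by simp only [hnex, hc]; rw [show m - 1 + 1 = m by omega]; simp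
        rw [this, hj₀eq]
        have := (hmemB (m-1)).2.1
        rw [show (m-1)+1 = m by omega] at this
        rw [hc]
        exact this
      · have : nexti i = i + 1 := by simp only [hnex]; exact Nat.mod_eq_of_lt (by omega)
        rw [this]
        exact (hmemB i).2.1
    have hprevmem : h (previ i) ∈ nbrsB (h i) := by
      by_cases hc : i = 0
      · have : previ i = m - 1 := by simp [hpre, hc]
        rw [this, hc, hj₀eq]
        have := (hmemB (m-1)).2.2
        rw [show (m-1)+1 = m by omega] at this
        exact this
      · have hpi : previ i = i - 1 := by simp [hpre, hc]
        rw [hpi]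
        have := (hmemB (i-1)).2.2
        rw [show (i-1)+1 = i by omega] at this
        exact this
    have hne : h (previ i) ≠ h (nexti i) := by
      by_cases hc : i = 0
      · have h1 : previ i = m - 1 := by simp [hpre, hc]
        have h2 : nexti i = 1 := by simp only [hnex, hc]; exact Nat.mod_eq_of_lt (by omega)
        rw [h1, h2]
        intro hEq
        exact hinj 1 (m-1) (by omega) (by omega) hEq.symm
      · by_cases hc2 : i = m - 1
        · have h1 : previ i = m - 2 := by
            simp only [hpre]; rw [if_neg hc]; omega
          have h2 : nexti i = 0 := by
            simp only [hnex, hc2]; rw [show m - 1 + 1 = m by omega]; simp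
          rw [h1, h2]
          intro hEq
          exact hinj 0 (m-2) (by omega) (by omega) hEq.symm
        · have h1 : previ i = i - 1 := by simp [hpre, hc]
          have h2 : nexti i = i + 1 := by simp only [hnex]; exact Nat.mod_eq_of_lt (by omega)
          rw [h1, h2]
          intro hEq
          apply hne2 (i - 1)
          rw [show i - 1 + 2 = i + 1 by omega]
          exact hEq.symm
    refine (Finset.eq_of_subset_of_card_le ?_ ?_).symm
    · intro w hw
      simp only [Finset.mem_insert, Finset.mem_singleton] at hw
      rcases hw with rfl | rfl
      · exact hprevmem
      · exact hnextmem
    · rw [h2 _ (hB i), Finset.card_insert_of_notMem (Finset.notMem_singleton.mpr hne),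
        Finset.card_singleton]
  have hadj_iff : ∀ i j, i < m → j < m →
      (G.Adj (h i) (h j) ↔ (j = nexti i ∨ i = nexti j)) := by
    intro i j him hjm
    constructor
    · intro hadj
      have hmem : h j ∈ nbrsB (h i) :=
        Finset.mem_filter.mpr ⟨(G.mem_neighborFinset _ _).mpr hadj, hB j⟩
      rw [hnbrs_eq i him] at hmem
      simp only [Finset.mem_insert, Finset.mem_singleton] at hmem
      rcases hmem with hEq | hEq
      · right
        have : j = previ i := hinj' j (previ i) hjm (hprelt i him) hEq
        simp only [hnex]
        simp only [hpre] at this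
        split_ifs at this with hc
        · subst hc; rw [this, show m - 1 + 1 = m by omega]; simp
        · rw [this, show i - 1 + 1 = i by omega, Nat.mod_eq_of_lt him]
      · left
        exact hinj' j (nexti i) hjm (hnexlt i) hEq
    · intro hor
      rcases hor with rfl | rfl
      · by_cases hc : i = m - 1
        · have : nexti i = 0 := by
            simp only [hnex, hc]; rw [show m - 1 + 1 = m by omega]; simp
          rw [this, hj₀eq, hc]
          have := hadjc (m-1)
          rw [show (m-1)+1 = m by omega] at this
          exact this
        · have : nexti i = i + 1 := by simp only [hnex]; exact Nat.mod_eq_of_lt (by omega)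
          rw [this]
          exact hadjc i
      · by_cases hc : j = m - 1
        · have : nexti j = 0 := by
            simp only [hnex, hc]; rw [show m - 1 + 1 = m by omega]; simp
          rw [this, hj₀eq, hc]
          have := hadjc (m-1)
          rw [show (m-1)+1 = m by omega] at this
          exact this.symm
        · have : nexti j = j + 1 := by simp only [hnex]; exact Nat.mod_eq_of_lt (by omega)
          rw [this]
          exact (hadjc j).symm
  -- the image is all of Bs
  set E : Finset V := (Finset.range m).image h with hE
  have hEcard : E.card = m := by
    rw [hE, Finset.card_image_of_injOn, Finset.card_range]
    intro i hi j hj heq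
    simp only [Finset.coe_range, Set.mem_Iio] at hi hj
    exact hinj' i j hi hj heq
  have hEB : E = Bs := by
    apply Finset.eq_of_subset_of_card_le
    · intro w hw
      obtain ⟨i, _, rfl⟩ := Finset.mem_image.mp hw
      exact hB i
    · -- Bs ⊆ E via connectivity
      have hsub : Bs ⊆ E := by
        intro w hw
        obtain ⟨p, hp⟩ := hconnB v₀ hv₀ w hw
        refine closed_reach G ?_ p (fun v hv => Finset.mem_coe.mp (hp v hv)) ?_
        · intro u hu w' hw' hadj
          obtain ⟨i, hi, rfl⟩ := Finset.mem_image.mp hu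
          rw [Finset.mem_range] at hi
          have hwm : w' ∈ nbrsB (h i) :=
            Finset.mem_filter.mpr ⟨(G.mem_neighborFinset _ _).mpr hadj, hw'⟩
          rw [hnbrs_eq i hi] at hwm
          simp only [Finset.mem_insert, Finset.mem_singleton] at hwm
          rcases hwm with rfl | rfl
          · exact Finset.mem_image.mpr ⟨previ i, Finset.mem_range.mpr (hprelt i hi), rfl⟩
          · exact Finset.mem_image.mpr ⟨nexti i, Finset.mem_range.mpr (hnexlt i), rfl⟩
        · exact Finset.mem_image.mpr ⟨0, Finset.mem_range.mpr (by omega), rfl⟩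
      exact Finset.card_le_card hsub
  have hmn : m = Bs.card := by rw [← hEB, hEcard]
  -- the equivalence Fin m ≃ Bs
  have hbij : Function.Bijective (fun i : Fin m => (⟨h i.val, hB i.val⟩ : (↑Bs : Set V))) := by
    constructor
    · intro i j heq
      have : h i.val = h j.val := congrArg Subtype.val heq
      exact Fin.ext (hinj' i.val j.val i.isLt j.isLt this)
    · rintro ⟨w, hw⟩
      have hw' : w ∈ E := hEB ▸ (Finset.mem_coe.mp hw)
      obtain ⟨i, hi, hieq⟩ := Finset.mem_image.mp hw'
      rw [Finset.mem_range] at hi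
      exact ⟨⟨i, hi⟩, Subtype.ext hieq⟩
  set e : Fin m ≃ (↑Bs : Set V) := Equiv.ofBijective _ hbij with he
  have heval : ∀ i : Fin m, (e i : V) = h i.val := fun i => rfl
  -- mod-m arithmetic bridge
  have hmodchar : ∀ d : ℕ, d < 2 * m → d % m = if d < m then d else d - m := by
    intro d hd
    split_ifs with hc
    · exact Nat.mod_eq_of_lt hc
    · rw [Nat.mod_eq_sub_mod (by omega)]
      exact Nat.mod_eq_of_lt (by omega)
  have hfinbridge : ∀ i j : Fin m, (j - i).val = 1 ↔ j.val = nexti i.val := by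
    intro i j
    have hsub : (j - i).val = (m - i.val + j.val) % m := by
      rw [Fin.sub_def]
    have h1 := hmodchar (m - i.val + j.val) (by omega)
    have h2 := hmodchar (i.val + 1) (by omega)
    simp only [hnex]
    rw [hsub, h1, h2]
    have hi := i.isLt
    have hj := j.isLt
    split_ifs <;> omega
  have hadj_iff_fin : ∀ i j : Fin m, G.Adj (h i.val) (h j.val) ↔
      (SimpleGraph.cycleGraph m).Adj i j := by
    intro i j
    rw [SimpleGraph.cycleGraph_adj', hadj_iff i.val j.val i.isLt j.isLt]
    rw [hfinbridge i j, hfinbridge j i]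
    tauto
  refine ⟨m, hmn, hm3, ⟨?_⟩, ?_⟩
  · -- the isomorphism
    refine ⟨e.symm, ?_⟩
    intro a b
    have ha : a = e (e.symm a) := (e.apply_symm_apply a).symm
    have hb : b = e (e.symm b) := (e.apply_symm_apply b).symm
    constructor
    · intro hadj
      rw [ha, hb, SimpleGraph.comap_adj]
      show G.Adj (e (e.symm a) : V) (e (e.symm b) : V)
      rw [heval, heval]
      exact (hadj_iff_fin _ _).mpr hadj
    · intro hadj
      rw [ha, hb] at hadj
      rw [SimpleGraph.comap_adj] at hadj
      have : G.Adj (h (e.symm a).val) (h (e.symm b).val) := by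
        rw [← heval, ← heval]; exact hadj
      exact (hadj_iff_fin _ _).mp this
  · -- the even coloring
    intro hodd
    have hmev : m % 2 = 0 := Nat.even_iff.mp (Nat.not_odd_iff_even.mp hodd)
    refine ⟨fun v => if hv : v ∈ Bs then
      decide ((e.symm ⟨v, Finset.mem_coe.mpr hv⟩).val % 2 = 0) else false, ?_⟩
    intro u hu w hw hadj
    simp only [dif_pos hu, dif_pos hw]
    set i : Fin m := e.symm ⟨u, Finset.mem_coe.mpr hu⟩ with hi
    set j : Fin m := e.symm ⟨w, Finset.mem_coe.mpr hw⟩ with hj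
    have hui : u = h i.val := by
      have := e.apply_symm_apply ⟨u, Finset.mem_coe.mpr hu⟩
      rw [← hi] at this
      exact (congrArg Subtype.val this).symm
    have hwj : w = h j.val := by
      have := e.apply_symm_apply ⟨w, Finset.mem_coe.mpr hw⟩
      rw [← hj] at this
      exact (congrArg Subtype.val this).symm
    have hadj' : G.Adj (h i.val) (h j.val) := hui ▸ hwj ▸ hadj
    have hor := (hadj_iff i.val j.val i.isLt j.isLt).mp hadj'
    have hiv := i.isLt
    have hjv := j.isLt
    have hpar : i.val % 2 ≠ j.val % 2 := by
      have h1 := hmodchar (i.val + 1) (by omega)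
      have h2 := hmodchar (j.val + 1) (by omega)
      simp only [hnex] at hor
      rcases hor with hc | hc <;> rw [hc] at * <;> [rw [h1]; rw [h2]] <;> split_ifs <;> omega
    simp only [ne_eq, decide_eq_decide]
    omega
end Cycle
section Stage2
set_option linter.unusedSectionVars false
set_option maxHeartbeats 1600000
variable {V : Type*} [Fintype V] [DecidableEq V] (G : SimpleGraph V) [DecidableRel G.Adj]

theorem walk_const {β : Type*} (f : V → β) (S : Finset V)
    (hconst : ∀ u ∈ S, ∀ w ∈ S, G.Adj u w → f u = f w) :
    ∀ {u w : V} (p : G.Walk u w), (∀ v ∈ p.support, v ∈ S) → f u = f w := by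
  intro u w p
  induction p with
  | nil => intro _; rfl
  | @cons u y w h q ih =>
    intro hsup
    have h1 : f u = f y := hconst u (hsup u (by simp)) y (hsup y (by simp)) h
    exact h1.trans (ih (fun v hv => hsup v (by simp [hv])))

theorem stage2 (L : V → Finset ℕ) (hL : ∀ v, G.degree v ≤ (L v).card)
    (Bset : Set V) (Bs : Finset V) (hBs : ∀ x, x ∈ Bs ↔ x ∈ Bset)
    (hNCV : NoCutVertexOn G Bset) (hNC : ¬ IsCompleteOn G Bset)
    (hNO : ¬ IsOddCycleOn G Bset)
    (c₁ : V → ℕ) (hc₁m : ∀ v, v ∉ Bs → c₁ v ∈ L v)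
    (hc₁p : ∀ u v, G.Adj u v → u ∉ Bs → v ∉ Bs → c₁ u ≠ c₁ v) :
    ∃ c : V → ℕ, (∀ v, c v ∈ L v) ∧ ∀ u v, G.Adj u v → c u ≠ c v := by
  classical
  have hBcoe : (↑Bs : Set V) = Bset := Set.ext fun x => by
    rw [Finset.mem_coe]; exact hBs x
  -- connectivity facts
  have hconnB : ∀ u ∈ Bs, ∀ w ∈ Bs, DW G ↑Bs u w := by
    intro u hu w hw
    rw [hBcoe]
    exact dw_of_induce_preconnected hNCV.1.preconnected ((hBs u).mp hu) ((hBs w).mp hw)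
  have hErase : ∀ v : V, (↑(Bs.erase v) : Set V) = Bset \ {v} := by
    intro v
    ext x
    simp only [Finset.coe_erase, Set.mem_diff, Set.mem_singleton_iff, hBcoe]
  have hncv : ∀ v ∈ Bs, ∀ u ∈ Bs.erase v, ∀ w ∈ Bs.erase v, DW G ↑(Bs.erase v) u w := by
    intro v hv u hu w hw
    rw [hErase v]
    have hu' : u ∈ Bset \ {v} := by rw [← hErase v]; exact Finset.mem_coe.mpr hu
    have hw' : w ∈ Bset \ {v} := by rw [← hErase v]; exact Finset.mem_coe.mpr hw
    exact dw_of_induce_preconnected (hNCV.2 v ((hBs v).mp hv)) hu' hw'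
  -- a nonadjacent pair
  obtain ⟨x, hx, z, hz, hxz, hnadj⟩ :
      ∃ x, x ∈ Bs ∧ ∃ z, z ∈ Bs ∧ x ≠ z ∧ ¬ G.Adj x z := by
    rw [IsCompleteOn] at hNC
    push_neg at hNC
    obtain ⟨u, v, huv, hnadj⟩ := hNC
    refine ⟨u.1, (hBs u.1).mpr u.2, v.1, (hBs v.1).mpr v.2, ?_, ?_⟩
    · intro h; exact huv (Subtype.ext h)
    · intro h; exact hnadj (by simpa [SimpleGraph.induce] using h)
  -- list bookkeeping
  set inB : V → Finset V := fun v => (G.neighborFinset v).filter (fun u => u ∈ Bs) with hinB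
  set outB : V → Finset V := fun v => (G.neighborFinset v).filter (fun u => u ∉ Bs) with houtB
  set ell : V → Finset ℕ := fun v => (L v) \ ((outB v).image c₁) with hell
  have hsplitd : ∀ v, (inB v).card + (outB v).card = G.degree v := by
    intro v
    exact Finset.card_filter_add_card_filter_not (s := G.neighborFinset v)
      (p := fun u => u ∈ Bs)
  have hℓ : ∀ v, (inB v).card ≤ (ell v).card := by
    intro v
    have h1 : (L v).card - ((outB v).image c₁).card ≤ (ell v).card :=
      Finset.le_card_sdiff _ _
    have h2 : ((outB v).image c₁).card ≤ (outB v).card := Finset.card_image_le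
    have h3 := hL v
    have h4 := hsplitd v
    omega
  -- the key counting estimates, for a set Q of pre-colored vertices with common color α
  have hkey1 : ∀ (Q : Finset V) (w : V), Q ⊆ Bs →
      ((G.neighborFinset w).filter (fun u => u ∈ Bs \ Q)).card
        + ((G.neighborFinset w).filter (fun u => u ∈ Q)).card = (inB w).card := by
    intro Q w hQB
    have h1 : ((G.neighborFinset w).filter (fun u => u ∈ Bs \ Q))
        = (inB w).filter (fun u => ¬ u ∈ Q) := by
      rw [hinB, Finset.filter_filter]
      apply Finset.filter_congr
      intro u _
      exact Finset.mem_sdiff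
    have h2 : ((G.neighborFinset w).filter (fun u => u ∈ Q))
        = (inB w).filter (fun u => u ∈ Q) := by
      rw [hinB, Finset.filter_filter]
      apply Finset.filter_congr
      intro u _
      constructor
      · intro h1; exact ⟨hQB h1, h1⟩
      · intro h1; exact h1.2
    rw [h1, h2]
    rw [Nat.add_comm]
    exact Finset.card_filter_add_card_filter_not (p := fun u => u ∈ Q)
  have hkey2 : ∀ (Q : Finset V) (α : ℕ) (c₂ : V → ℕ), Q ⊆ Bs →
      (∀ t, t ∉ Q → c₂ t = c₁ t) → (∀ t ∈ Q, c₂ t = α) → ∀ w : V,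
      (ell w) \ {α} ⊆ (L w) \ (((G.neighborFinset w).filter (fun u => u ∉ Bs \ Q)).image c₂) := by
    intro Q α c₂ hQB hoff hon w
    intro γ hγ
    rcases Finset.mem_sdiff.mp hγ with ⟨hγ1, hγ2⟩
    rcases Finset.mem_sdiff.mp hγ1 with ⟨hγL, hγim⟩
    rw [Finset.mem_singleton] at hγ2
    refine Finset.mem_sdiff.mpr ⟨hγL, fun hc => ?_⟩
    obtain ⟨t, ht, htγ⟩ := Finset.mem_image.mp hc
    rcases Finset.mem_filter.mp ht with ⟨htn, htS⟩
    by_cases htQ : t ∈ Q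
    · rw [hon t htQ] at htγ
      exact hγ2 htγ.symm
    · have htB : t ∉ Bs := by
        intro hB
        exact htS (Finset.mem_sdiff.mpr ⟨hB, htQ⟩)
      rw [hoff t htQ] at htγ
      apply hγim
      exact Finset.mem_image.mpr ⟨t, Finset.mem_filter.mpr ⟨htn, htB⟩, htγ⟩
  have hkey2' : ∀ (Q : Finset V) (c₂ : V → ℕ), Q ⊆ Bs →
      (∀ t, t ∉ Q → c₂ t = c₁ t) → ∀ w : V,
      ((G.neighborFinset w).filter (fun u => u ∈ Q)) = ∅ →
      (ell w) ⊆ (L w) \ (((G.neighborFinset w).filter (fun u => u ∉ Bs \ Q)).image c₂) := by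
    intro Q c₂ hQB hoff w hQemp
    intro γ hγ
    rcases Finset.mem_sdiff.mp hγ with ⟨hγL, hγim⟩
    refine Finset.mem_sdiff.mpr ⟨hγL, fun hc => ?_⟩
    obtain ⟨t, ht, htγ⟩ := Finset.mem_image.mp hc
    rcases Finset.mem_filter.mp ht with ⟨htn, htS⟩
    by_cases htQ : t ∈ Q
    · have : t ∈ (G.neighborFinset w).filter (fun u => u ∈ Q) :=
        Finset.mem_filter.mpr ⟨htn, htQ⟩
      rw [hQemp] at this
      simp at this
    · have htB : t ∉ Bs := by
        intro hB
        exact htS (Finset.mem_sdiff.mpr ⟨hB, htQ⟩)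
      rw [hoff t htQ] at htγ
      apply hγim
      exact Finset.mem_image.mpr ⟨t, Finset.mem_filter.mpr ⟨htn, htB⟩, htγ⟩
  -- CASE A : some vertex has surplus
  by_cases hA : ∃ v₀ ∈ Bs, (inB v₀).card < (ell v₀).card
  · obtain ⟨v₀, hv₀, hv₀lt⟩ := hA
    obtain ⟨c', _, hc'2, hc'3⟩ := colorSet G L Bs v₀ hv₀ c₁ hc₁m hc₁p
      (fun w hw => hconnB w hw v₀ hv₀)
      (fun w hw _ => hℓ w)
      hv₀lt
    exact ⟨c', hc'2, hc'3⟩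
  · push_neg at hA
    have hAeq : ∀ v ∈ Bs, (ell v).card = (inB v).card :=
      fun v hv => Nat.le_antisymm (hA v hv) (hℓ v)
    -- generic counting estimate for the to-be-colored part
    have hcntgen : ∀ (Q : Finset V) (α : ℕ) (c₂ : V → ℕ), Q ⊆ Bs →
        (∀ t, t ∉ Q → c₂ t = c₁ t) → (∀ t ∈ Q, c₂ t = α) → ∀ w ∈ Bs,
        ((G.neighborFinset w).filter (fun u => u ∈ Bs \ Q)).card
          ≤ ((L w) \ (((G.neighborFinset w).filter (fun u => u ∉ Bs \ Q)).image c₂)).card := by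
      intro Q α c₂ hQB hoff hon w hwB
      have hk1' := hkey1 Q w hQB
      by_cases hQw : ((G.neighborFinset w).filter (fun u => u ∈ Q)) = ∅
      · have hsub := hkey2' Q c₂ hQB hoff w hQw
        have h1 := Finset.card_le_card hsub
        have h2 := hAeq w hwB
        rw [hQw] at hk1'
        simp only [Finset.card_empty] at hk1'
        omega
      · have hQne : 1 ≤ ((G.neighborFinset w).filter (fun u => u ∈ Q)).card :=
          Finset.card_pos.mpr (Finset.nonempty_of_ne_empty hQw)
        have hsub := hkey2 Q α c₂ hQB hoff hon w
        have h1 := Finset.card_le_card hsub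
        have h2 : (ell w).card - 1 ≤ ((ell w) \ {α}).card := by
          have := Finset.le_card_sdiff ({α} : Finset ℕ) (ell w)
          simp only [Finset.card_singleton] at this
          exact this
        have h3 := hAeq w hwB
        omega
    -- CASE B : two adjacent vertices in B with different residual lists
    have caseB : ∀ u₀ ∈ Bs, ∀ w₀ ∈ Bs, G.Adj u₀ w₀ → ∀ α, α ∈ ell u₀ → α ∉ ell w₀ →
        ∃ c : V → ℕ, (∀ v, c v ∈ L v) ∧ ∀ u v, G.Adj u v → c u ≠ c v := by
      intro u₀ hu₀B w₀ hw₀B hadj α hαu hαw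
      set Q : Finset V := {u₀} with hQ
      set S : Finset V := Bs \ Q with hS
      set c₂ : V → ℕ := Function.update c₁ u₀ α with hc₂
      have hc₂u₀ : c₂ u₀ = α := Function.update_self _ _ _
      have hoff : ∀ t, t ∉ Q → c₂ t = c₁ t := by
        intro t ht
        rw [hQ, Finset.mem_singleton] at ht
        exact Function.update_of_ne ht _ _
      have hon : ∀ t ∈ Q, c₂ t = α := by
        intro t ht
        rw [hQ, Finset.mem_singleton] at ht
        rw [ht]; exact hc₂u₀
      have hQB : Q ⊆ Bs := by
        intro t ht
        rw [hQ, Finset.mem_singleton] at ht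
        exact ht ▸ hu₀B
      have hαLu : α ∈ L u₀ := (Finset.mem_sdiff.mp hαu).1
      have hαout : α ∉ (outB u₀).image c₁ := (Finset.mem_sdiff.mp hαu).2
      have hw₀S : w₀ ∈ S := by
        rw [hS, Finset.mem_sdiff, hQ, Finset.mem_singleton]
        exact ⟨hw₀B, hadj.ne'⟩
      have hSerase : S = Bs.erase u₀ := by
        rw [hS, hQ, Finset.erase_eq]
      obtain ⟨c', _, hc'2, hc'3⟩ := colorSet G L S w₀ hw₀S c₂
        (by -- membership off S
          intro v hv
          by_cases hvu : v = u₀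
          · rw [hvu, hc₂u₀]; exact hvu ▸ hαLu
          · rw [hoff v (by rw [hQ, Finset.mem_singleton]; exact hvu)]
            apply hc₁m
            intro hvB
            exact hv (by rw [hS, Finset.mem_sdiff, hQ, Finset.mem_singleton]; exact ⟨hvB, hvu⟩))
        (by -- properness off S
          intro u v huv hu hv
          by_cases hvu : u = u₀
          · subst hvu
            have hvne : v ≠ u := huv.ne'
            have hvB : v ∉ Bs := by
              intro hvB
              exact hv (by rw [hS, Finset.mem_sdiff, hQ, Finset.mem_singleton]; exact ⟨hvB, hvne⟩)
            rw [hc₂u₀, hoff v (by rw [hQ, Finset.mem_singleton]; exact hvne)]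
            intro hEq
            apply hαout
            exact Finset.mem_image.mpr ⟨v, Finset.mem_filter.mpr
              ⟨(G.mem_neighborFinset _ _).mpr huv, hvB⟩, hEq.symm⟩
          · by_cases hvv : v = u₀
            · subst hvv
              have hune : u ≠ v := huv.ne
              have huB : u ∉ Bs := by
                intro huB
                exact hu (by rw [hS, Finset.mem_sdiff, hQ, Finset.mem_singleton]; exact ⟨huB, hune⟩)
              rw [hc₂u₀, hoff u (by rw [hQ, Finset.mem_singleton]; exact hune)]
              intro hEq
              apply hαout
              exact Finset.mem_image.mpr ⟨u, Finset.mem_filter.mpr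
                ⟨(G.mem_neighborFinset _ _).mpr huv.symm, huB⟩, hEq⟩
            · have huB : u ∉ Bs := by
                intro huB
                exact hu (by rw [hS, Finset.mem_sdiff, hQ, Finset.mem_singleton]; exact ⟨huB, hvu⟩)
              have hvB : v ∉ Bs := by
                intro hvB
                exact hv (by rw [hS, Finset.mem_sdiff, hQ, Finset.mem_singleton]; exact ⟨hvB, hvv⟩)
              rw [hoff u (by rw [hQ, Finset.mem_singleton]; exact hvu),
                hoff v (by rw [hQ, Finset.mem_singleton]; exact hvv)]
              exact hc₁p u v huv huB hvB)
        (by -- reachability within S towards w₀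
          intro w hw
          rw [hS, hQ] at hw ⊢
          rw [show (Bs \ ({u₀} : Finset V)) = Bs.erase u₀ from by rw [Finset.erase_eq]] at hw ⊢
          exact hncv u₀ hu₀B w hw w₀ (by rw [Finset.mem_erase]; exact ⟨hadj.ne', hw₀B⟩))
        (by -- the count for non-root vertices
          intro w hw _
          exact hcntgen Q α c₂ hQB hoff hon w (Finset.mem_sdiff.mp hw).1)
        (by -- strict at the root w₀
          have hu₀nbr : u₀ ∈ G.neighborFinset w₀ := (G.mem_neighborFinset _ _).mpr hadj.symm
          have hfQ : ((G.neighborFinset w₀).filter (fun u => u ∈ Q)) = {u₀} := by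
            ext t
            simp only [Finset.mem_filter, hQ, Finset.mem_singleton]
            constructor
            · rintro ⟨_, h⟩; exact h
            · rintro rfl; exact ⟨hu₀nbr, rfl⟩
          have hk1' := hkey1 Q w₀ hQB
          rw [hfQ, Finset.card_singleton] at hk1'
          have hu₀in : u₀ ∈ inB w₀ := Finset.mem_filter.mpr ⟨hu₀nbr, hu₀B⟩
          have hinpos : 1 ≤ (inB w₀).card := Finset.card_pos.mpr ⟨u₀, hu₀in⟩
          have hsub := hkey2 Q α c₂ hQB hoff hon w₀
          have h1 := Finset.card_le_card hsub
          have h2 : (ell w₀) \ {α} = ell w₀ := by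
            apply Finset.sdiff_eq_self_of_disjoint
            simp [Finset.disjoint_singleton_right, hαw]
          rw [h2] at h1
          have h3 := hAeq w₀ hw₀B
          rw [← hS] at hk1' h1
          omega)
      exact ⟨c', hc'2, hc'3⟩
    by_cases hCB : ∃ u₀ ∈ Bs, ∃ w₀ ∈ Bs, G.Adj u₀ w₀ ∧ ell u₀ ≠ ell w₀
    · obtain ⟨u₀, hu₀B, w₀, hw₀B, hadj, hne⟩ := hCB
      have : (∃ α, α ∈ ell u₀ ∧ α ∉ ell w₀) ∨ (∃ α, α ∈ ell w₀ ∧ α ∉ ell u₀) := by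
        by_contra hcon
        push_neg at hcon
        apply hne
        apply Finset.ext
        intro γ
        exact ⟨fun h => hcon.1 γ h, fun h => hcon.2 γ h⟩
      rcases this with ⟨α, h1, h2⟩ | ⟨α, h1, h2⟩
      · exact caseB u₀ hu₀B w₀ hw₀B hadj α h1 h2
      · exact caseB w₀ hw₀B u₀ hu₀B hadj.symm α h1 h2
    · -- CASE C : the residual lists are constant on B, so the B-graph is regular
      push_neg at hCB
      have hglob : ∀ u ∈ Bs, ∀ w ∈ Bs, ell u = ell w := by
        intro u hu w hw
        obtain ⟨p, hp⟩ := hconnB u hu w hw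
        exact walk_const G ell Bs (fun u' hu' w' hw' h => hCB u' hu' w' hw' h) p
          (fun v hv => Finset.mem_coe.mp (hp v hv))
      set k : ℕ := (ell x).card with hkdef
      have hreg : ∀ v ∈ Bs, (inB v).card = k := by
        intro v hv
        rw [← hAeq v hv, hkdef, hglob v hv x hx]
      have hk1 : 1 ≤ k := by
        obtain ⟨p, hp⟩ := hconnB x hx z hz
        cases p with
        | nil => exact absurd rfl hxz
        | cons h q =>
          rename_i y
          have hyB : y ∈ Bs := Finset.mem_coe.mp (hp y (by simp))
          have : y ∈ inB x := Finset.mem_filter.mpr ⟨(G.mem_neighborFinset _ _).mpr h, hyB⟩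
          have := Finset.card_pos.mpr ⟨y, this⟩
          rw [hreg x hx] at this
          omega
      have hk2 : 2 ≤ k := by
        by_contra hcon
        have hkeq : k = 1 := by omega
        have hcard1 : (inB x).card = 1 := by rw [hreg x hx, hkeq]
        obtain ⟨w₁, hw₁⟩ := Finset.card_eq_one.mp hcard1
        have hw₁mem : w₁ ∈ inB x := by rw [hw₁]; simp
        have hw₁B : w₁ ∈ Bs := (Finset.mem_filter.mp hw₁mem).2
        have hadjxw₁ : G.Adj x w₁ := (G.mem_neighborFinset _ _).mp (Finset.mem_filter.mp hw₁mem).1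
        have hzw₁ : z ≠ w₁ := by
          rintro rfl
          exact hnadj hadjxw₁
        have hxw₁ : x ≠ w₁ := hadjxw₁.ne
        obtain ⟨p, hp⟩ := hncv w₁ hw₁B x (Finset.mem_erase.mpr ⟨hxw₁, hx⟩) z
          (Finset.mem_erase.mpr ⟨hzw₁, hz⟩)
        cases p with
        | nil => exact hxz rfl
        | cons h q =>
          rename_i y
          have hy : y ∈ Bs.erase w₁ := Finset.mem_coe.mp (hp y (by simp))
          have hyB : y ∈ Bs := Finset.mem_of_mem_erase hy
          have : y ∈ inB x := Finset.mem_filter.mpr ⟨(G.mem_neighborFinset _ _).mpr h, hyB⟩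
          rw [hw₁] at this
          rw [Finset.mem_singleton] at this
          exact (Finset.mem_erase.mp hy).1 this
      by_cases hk3 : 3 ≤ k
      · -- CASE C3 : Brooks-type argument
        obtain ⟨y, a, b, hyB, haB, hbB, hya, hyb, hab, hnab, hreachS⟩ :=
          exists_triple G Bs hconnB hncv
            (fun v hv => by
              have h5 : ((G.neighborFinset v).filter (· ∈ Bs)).card = k := hreg v hv
              omega)
            x z hx hz hxz hnadj
        obtain ⟨α, hα⟩ : (ell a).Nonempty := by
          apply Finset.card_pos.mp
          rw [hAeq a haB, hreg a haB]
          omega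
        have hαb : α ∈ ell b := by rw [hglob b hbB a haB]; exact hα
        set Q : Finset V := {a, b} with hQ
        set S : Finset V := Bs \ Q with hS
        set c₂ : V → ℕ := Function.update (Function.update c₁ a α) b α with hc₂
        have hc₂b : c₂ b = α := Function.update_self _ _ _
        have hc₂a : c₂ a = α := by
          rw [hc₂, Function.update_of_ne hab, Function.update_self]
        have hoff : ∀ t, t ∉ Q → c₂ t = c₁ t := by
          intro t ht
          rw [hQ, Finset.mem_insert, Finset.mem_singleton] at ht
          push_neg at ht
          rw [hc₂, Function.update_of_ne ht.2, Function.update_of_ne ht.1]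
        have hon : ∀ t ∈ Q, c₂ t = α := by
          intro t ht
          rw [hQ, Finset.mem_insert, Finset.mem_singleton] at ht
          rcases ht with rfl | rfl
          · exact hc₂a
          · exact hc₂b
        have hQB : Q ⊆ Bs := by
          intro t ht
          rw [hQ, Finset.mem_insert, Finset.mem_singleton] at ht
          rcases ht with rfl | rfl
          · exact haB
          · exact hbB
        have houtadj : ∀ t s, t ∈ Bs → α ∈ ell t → G.Adj t s → s ∉ Bs → α ≠ c₁ s := by
          intro t s htB hαt hts hsB hEq
          apply (Finset.mem_sdiff.mp hαt).2
          exact Finset.mem_image.mpr ⟨s, Finset.mem_filter.mpr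
            ⟨(G.mem_neighborFinset _ _).mpr hts, hsB⟩, hEq.symm⟩
        have hmemS : ∀ v, v ∉ S → v = a ∨ v = b ∨ v ∉ Bs := by
          intro v hv
          by_cases hva : v = a
          · exact Or.inl hva
          by_cases hvb : v = b
          · exact Or.inr (Or.inl hvb)
          right; right
          intro hvB
          exact hv (by rw [hS, Finset.mem_sdiff, hQ, Finset.mem_insert, Finset.mem_singleton]
                       exact ⟨hvB, by push_neg; exact ⟨hva, hvb⟩⟩)
        have hyS : y ∈ S := by
          rw [hS, Finset.mem_sdiff, hQ, Finset.mem_insert, Finset.mem_singleton]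
          exact ⟨hyB, by push_neg; exact ⟨hya.ne, hyb.ne⟩⟩
        obtain ⟨c', _, hc'2, hc'3⟩ := colorSet G L S y hyS c₂
          (by -- membership
            intro v hv
            rcases hmemS v hv with rfl | rfl | hvB
            · rw [hc₂a]; exact (Finset.mem_sdiff.mp hα).1
            · rw [hc₂b]; exact (Finset.mem_sdiff.mp hαb).1
            · rw [hoff v (fun hvQ => hvB (hQB hvQ))]
              exact hc₁m v hvB)
          (by -- properness off S
            intro u v huv hu hv
            rcases hmemS u hu with rfl | rfl | huB <;> rcases hmemS v hv with rfl | rfl | hvB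
            · exact absurd huv (G.loopless.irrefl _)
            · exact absurd huv hnab
            · rw [hc₂a, hoff v (fun hvQ => hvB (hQB hvQ))]
              exact houtadj _ _ haB hα huv hvB
            · exact absurd huv.symm hnab
            · exact absurd huv (G.loopless.irrefl _)
            · rw [hc₂b, hoff v (fun hvQ => hvB (hQB hvQ))]
              exact houtadj _ _ hbB hαb huv hvB
            · rw [hoff u (fun huQ => huB (hQB huQ)), hc₂a]
              exact fun hEq => (houtadj _ _ haB hα huv.symm huB) hEq.symm
            · rw [hoff u (fun huQ => huB (hQB huQ)), hc₂b]
              exact fun hEq => (houtadj _ _ hbB hαb huv.symm huB) hEq.symm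
            · rw [hoff u (fun huQ => huB (hQB huQ)), hoff v (fun hvQ => hvB (hQB hvQ))]
              exact hc₁p u v huv huB hvB)
          (by -- reachability
            intro w hw
            exact hreachS w hw)
          (by -- count for non-root
            intro w hw _
            exact hcntgen Q α c₂ hQB hoff hon w (Finset.mem_sdiff.mp hw).1)
          (by -- strict at root y
            have hanbr : a ∈ G.neighborFinset y := (G.mem_neighborFinset _ _).mpr hya
            have hbnbr : b ∈ G.neighborFinset y := (G.mem_neighborFinset _ _).mpr hyb
            have hfQ : ((G.neighborFinset y).filter (fun u => u ∈ Q)) = {a, b} := by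
              ext t
              simp only [Finset.mem_filter, hQ, Finset.mem_insert, Finset.mem_singleton]
              constructor
              · rintro ⟨_, h⟩; exact h
              · rintro (rfl | rfl)
                · exact ⟨hanbr, Or.inl rfl⟩
                · exact ⟨hbnbr, Or.inr rfl⟩
            have hk1' := hkey1 Q y hQB
            rw [hfQ] at hk1'
            have hc2 : ({a, b} : Finset V).card = 2 := by
              rw [Finset.card_insert_of_notMem (Finset.notMem_singleton.mpr hab),
                Finset.card_singleton]
            rw [hc2] at hk1'
            have hsub := hkey2 Q α c₂ hQB hoff hon y
            have h1 := Finset.card_le_card hsub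
            have h2 : (ell y).card - 1 ≤ ((ell y) \ {α}).card := by
              have := Finset.le_card_sdiff ({α} : Finset ℕ) (ell y)
              simp only [Finset.card_singleton] at this
              exact this
            have h3 := hAeq y hyB
            have h4 := hreg y hyB
            rw [← hS] at hk1' h1
            omega)
        exact ⟨c', hc'2, hc'3⟩
      · -- CASE C2 : the B-graph is an even cycle
        have hkeq : k = 2 := by omega
        obtain ⟨n, hmn, hm3, ⟨iso⟩, hcolor⟩ := two_regular_cycle G Bs hconnB ⟨x, hx⟩
          (fun v hv => by
            have h5 : ((G.neighborFinset v).filter (· ∈ Bs)).card = k := hreg v hv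
            omega)
        by_cases hodd : Odd n
        · exfalso
          apply hNO
          refine ⟨n, hodd, ?_⟩
          rw [← hBcoe]
          exact ⟨iso⟩
        · obtain ⟨g, hg⟩ := hcolor hodd
          obtain ⟨α₀, α₁, hαne, hellx⟩ := Finset.card_eq_two.mp (show (ell x).card = 2 by
            rw [← hkdef, hkeq])
          set c : V → ℕ := fun v => if v ∈ Bs then (if g v then α₀ else α₁) else c₁ v with hc
          have hcB : ∀ v ∈ Bs, c v ∈ ell v := by
            intro v hv
            rw [hglob v hv x hx, hellx, hc]
            simp only [if_pos hv]
            by_cases hgv : g v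
            · rw [if_pos hgv]; simp
            · rw [if_neg hgv]; simp
          refine ⟨c, ?_, ?_⟩
          · intro v
            by_cases hv : v ∈ Bs
            · exact (Finset.mem_sdiff.mp (hcB v hv)).1
            · rw [hc]; simp only [if_neg hv]; exact hc₁m v hv
          · intro u v huv
            by_cases hu : u ∈ Bs <;> by_cases hv : v ∈ Bs
            · have hgne := hg u hu v hv huv
              rw [hc]
              simp only [if_pos hu, if_pos hv]
              by_cases hgu : g u <;> by_cases hgv : g v
              · simp [hgu, hgv] at hgne
              · rw [if_pos hgu, if_neg hgv]; exact hαne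
              · rw [if_neg hgu, if_pos hgv]; exact hαne.symm
              · simp [hgu, hgv] at hgne
            · have hcu := hcB u hu
              have hcv : c v = c₁ v := by rw [hc]; simp only [if_neg hv]
              intro hEq
              apply (Finset.mem_sdiff.mp hcu).2
              refine Finset.mem_image.mpr ⟨v, Finset.mem_filter.mpr
                ⟨(G.mem_neighborFinset _ _).mpr huv, hv⟩, ?_⟩
              exact hcv ▸ hEq.symm
            · have hcv := hcB v hv
              have hcu : c u = c₁ u := by rw [hc]; simp only [if_neg hu]
              intro hEq
              apply (Finset.mem_sdiff.mp hcv).2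
              refine Finset.mem_image.mpr ⟨u, Finset.mem_filter.mpr
                ⟨(G.mem_neighborFinset _ _).mpr huv.symm, hu⟩, ?_⟩
              exact hcu ▸ hEq
            · rw [hc]
              simp only [if_neg hu, if_neg hv]
              exact hc₁p u v huv hu hv
end Stage2

/-- Borodin–Erdős–Rubin–Taylor, second case: if `G` is connected, every list has size at
least the degree, and some block of `G` is neither complete nor an odd cycle (`G` is not a
Gallai tree), then `G` admits a proper `L`-coloring. -/
theorem degree_choosable_of_not_gallai_tree [Fintype V]
    (G : SimpleGraph V) [DecidableRel G.Adj]
    (L : V → Finset ℕ)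
    (hL : ∀ v, G.degree v ≤ (L v).card)
    (hconn : G.Connected)
    (hblock : ∃ B : Set V, IsBlockOn G B ∧ ¬ IsCompleteOn G B ∧ ¬ IsOddCycleOn G B) :
    ∃ c : V → ℕ, (∀ v, c v ∈ L v) ∧ ∀ u v, G.Adj u v → c u ≠ c v := by
  classical
  obtain ⟨Bset, ⟨hNCV, -⟩, hNC, hNO⟩ := hblock
  set Bs : Finset V := Finset.univ.filter (fun x => x ∈ Bset) with hBsdef
  have hBs : ∀ x, x ∈ Bs ↔ x ∈ Bset := fun x => by simp [hBsdef]
  have hBne : Bs.Nonempty := by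
    obtain ⟨⟨v, hv⟩⟩ := hNCV.1.nonempty
    exact ⟨v, (hBs v).mpr hv⟩
  obtain ⟨c₁, hc₁m, hc₁p⟩ := stage1 G L hL hconn Bs hBne
  exact stage2 G L hL Bset Bs hBs hNCV hNC hNO c₁ hc₁m hc₁p
end

section
/- Let P ∈ F[X₁,…,Xₙ] be a polynomial over a field F, and suppose the coefficient of the monomial ∏ᵢ Xᵢ^{kᵢ} is nonzero in P and deg(P) = Σᵢ kᵢ. Then for any subsets S₁,…,Sₙ ⊆ F with |Sᵢ| > kᵢ for all i, there exist sᵢ ∈ Sᵢ with P(s₁,…,sₙ) ≠ 0. -/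
open MvPolynomial

namespace CNAux

variable {F : Type*} [Field F] {n : ℕ}

lemma dvd_sub_subst (i : Fin n) (a : F) (P : MvPolynomial (Fin n) F) :
    (X i - C a) ∣ P - MvPolynomial.aeval (Function.update X i (C a)) P := by
  induction P using MvPolynomial.induction_on with
  | C b => simp [aeval_C, algebraMap_eq]
  | add p q hp hq =>
    have h := dvd_add hp hq
    convert h using 1
    rw [map_add]; ring
  | mul_X p j hp =>
    rw [map_mul, aeval_X]
    have h2 : (X i - C a) ∣ X j - Function.update X i (C a) j := by
      rcases eq_or_ne j i with rfl | hj
      · rw [Function.update_self]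
      · rw [Function.update_of_ne hj]; simp
    have key : p * X j - (MvPolynomial.aeval (Function.update X i (C a))) p
          * Function.update X i (C a) j
        = (p - (MvPolynomial.aeval (Function.update X i (C a))) p) * X j
          + (MvPolynomial.aeval (Function.update X i (C a))) p
            * (X j - Function.update X i (C a) j) := by ring
    rw [key]
    exact dvd_add (hp.mul_right _) (h2.mul_left _)

lemma deg_update_le (i : Fin n) (a : F) (j : Fin n) :
    (Function.update X i (C a) j : MvPolynomial (Fin n) F).totalDegree ≤ 1 := by
  rcases eq_or_ne j i with rfl | hj
  · rw [Function.update_self, totalDegree_C]; omega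
  · rw [Function.update_of_ne hj, totalDegree_X]

lemma subst_deg_le (i : Fin n) (a : F) (P : MvPolynomial (Fin n) F) :
    (MvPolynomial.aeval (Function.update X i (C a)) P).totalDegree ≤ P.totalDegree := by
  conv_lhs => rw [P.as_sum, map_sum]
  apply totalDegree_finsetSum_le
  intro m hm
  rw [aeval_monomial]
  refine le_trans (totalDegree_mul _ _) ?_
  rw [MvPolynomial.algebraMap_eq, totalDegree_C, zero_add]
  refine le_trans ?_ (le_totalDegree hm)
  rw [Finsupp.prod]
  refine le_trans (totalDegree_finset_prod _ _) ?_
  rw [Finsupp.sum]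
  apply Finset.sum_le_sum
  intro j _
  refine le_trans (totalDegree_pow _ _) ?_
  calc m j * (Function.update X i (C a) j : MvPolynomial (Fin n) F).totalDegree
      ≤ m j * 1 := Nat.mul_le_mul_left _ (deg_update_le i a j)
    _ = m j := by omega

lemma subst_degreeOf (i : Fin n) (a : F) (P : MvPolynomial (Fin n) F) :
    MvPolynomial.degreeOf i (MvPolynomial.aeval (Function.update X i (C a)) P) = 0 := by
  refine Nat.le_zero.mp ?_
  conv_lhs => rw [P.as_sum, map_sum]
  refine le_trans (degreeOf_sum_le _ _ _) ?_
  apply Finset.sup_le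
  intro m hm
  rw [aeval_monomial]
  refine le_trans (degreeOf_mul_le _ _ _) ?_
  rw [MvPolynomial.algebraMap_eq, degreeOf_C, zero_add]
  rw [Finsupp.prod]
  refine le_trans (degreeOf_prod_le _ _ _) ?_
  refine Nat.le_zero.mpr (Finset.sum_eq_zero ?_)
  intro j _
  refine Nat.le_zero.mp (le_trans (degreeOf_pow_le _ _ _) ?_)
  rcases eq_or_ne j i with rfl | hj
  · rw [Function.update_self, degreeOf_C]; omega
  · rw [Function.update_of_ne hj, degreeOf_X, if_neg (Ne.symm hj)]; omega

lemma subst_eval (i : Fin n) (a : F) (s : Fin n → F) (P : MvPolynomial (Fin n) F) :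
    MvPolynomial.eval s (MvPolynomial.aeval (Function.update X i (C a)) P)
      = MvPolynomial.eval (Function.update s i a) P := by
  induction P using MvPolynomial.induction_on with
  | C b => simp [aeval_C, algebraMap_eq]
  | add p q hp hq => rw [map_add, map_add, map_add, hp, hq]
  | mul_X p j hp =>
    rw [map_mul, map_mul, map_mul, hp, aeval_X]
    congr 1
    rcases eq_or_ne j i with rfl | hj
    · simp
    · simp [Function.update_of_ne hj]

lemma deg_X_mul (i : Fin n) {Q : MvPolynomial (Fin n) F} (hQ : Q ≠ 0) :
    (X i * Q).totalDegree = Q.totalDegree + 1 := by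
  apply le_antisymm
  · refine le_trans (totalDegree_mul _ _) ?_
    rw [totalDegree_X]; omega
  · obtain ⟨m, hm, hdeg⟩ := Finset.exists_mem_eq_sup Q.support
      (support_nonempty.mpr hQ) fun m => m.sum fun _ e => e
    have h1 : MvPolynomial.coeff (Finsupp.single i 1 + m) (X i * Q) ≠ 0 := by
      rw [coeff_X_mul]; exact mem_support_iff.mp hm
    have h2 := le_totalDegree (mem_support_iff.mpr h1)
    have h3 : ((Finsupp.single i 1 + m).sum fun _ e => e)
        = 1 + (m.sum fun _ e => e) := by
      rw [Finsupp.sum_add_index' (fun _ => rfl) (fun _ _ _ => rfl),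
        Finsupp.sum_single_index rfl]
    have h4 : Q.totalDegree = m.sum fun _ e => e := hdeg
    omega

lemma deg_factor_mul (i : Fin n) (a : F) {Q : MvPolynomial (Fin n) F} (hQ : Q ≠ 0) :
    ((X i - C a) * Q).totalDegree = Q.totalDegree + 1 := by
  have hsub : (X i - C a) * Q = X i * Q + -(C a * Q) := by ring
  rw [hsub]
  have hca : (-(C a * Q)).totalDegree < (X i * Q).totalDegree := by
    rw [totalDegree_neg, deg_X_mul i hQ]
    refine lt_of_le_of_lt (le_trans (totalDegree_mul _ _) ?_) (Nat.lt_succ_self _)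
    rw [totalDegree_C]; omega
  rw [totalDegree_add_eq_left_of_totalDegree_lt hca, deg_X_mul i hQ]

lemma finsupp_sum_eq (m : Fin n →₀ ℕ) :
    (m.sum fun _ e => e) = ∑ j, m j :=
  Finsupp.sum_fintype _ _ fun _ => rfl

lemma support_sum_eq (m : Fin n →₀ ℕ) : ∑ j ∈ m.support, m j = ∑ j, m j :=
  Finset.sum_subset (Finset.subset_univ _)
    (fun _ _ hx => Finsupp.notMem_support_iff.mp hx)

lemma aux (N : ℕ) : ∀ (k : Fin n → ℕ), ∑ i, k i = N →
    ∀ P : MvPolynomial (Fin n) F,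
    P.coeff (Finsupp.equivFunOnFinite.symm k) ≠ 0 →
    P.totalDegree = ∑ i, k i →
    ∀ S : Fin n → Finset F, (∀ i, k i < (S i).card) →
    ∃ s : Fin n → F, (∀ i, s i ∈ S i) ∧ MvPolynomial.eval s P ≠ 0 := by
  induction N using Nat.strong_induction_on with
  | _ N IH =>
  intro k hkN P hcoeff hdeg S hS
  classical
  have hmk : ∀ j, (Finsupp.equivFunOnFinite.symm k) j = k j := fun j => rfl
  by_cases hzero : ∀ i, k i = 0
  · -- base case: P is a nonzero constant
    have hk0 : (Finsupp.equivFunOnFinite.symm k) = 0 := by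
      ext j; rw [hmk]; exact hzero j
    have hSne : ∀ i, ∃ x, x ∈ S i := by
      intro i
      exact Finset.card_pos.mp (lt_of_le_of_lt (Nat.zero_le _) (hS i))
    choose s hs using hSne
    refine ⟨s, hs, ?_⟩
    have hPd : P.totalDegree = 0 := by
      rw [hdeg]; exact Finset.sum_eq_zero fun i _ => hzero i
    have hPC : P = C (P.coeff 0) := by
      ext m
      rcases eq_or_ne m 0 with rfl | hm
      · simp
      · rw [coeff_C, if_neg (Ne.symm hm)]
        by_contra hc
        have h5 := le_totalDegree (mem_support_iff.mpr hc)
        rw [hPd, Nat.le_zero, finsupp_sum_eq] at h5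
        refine hm (Finsupp.ext fun j => ?_)
        have h6 := Finset.sum_eq_zero_iff.mp h5 j (Finset.mem_univ j)
        simpa using h6
    rw [hPC, eval_C]
    rw [hk0] at hcoeff
    exact hcoeff
  · push_neg at hzero
    obtain ⟨i, hki⟩ := hzero
    have hki1 : 1 ≤ k i := Nat.one_le_iff_ne_zero.mpr hki
    -- pick a ∈ S i
    obtain ⟨a, ha⟩ := Finset.card_pos.mp (lt_of_le_of_lt (Nat.zero_le _) (hS i))
    set R := MvPolynomial.aeval (Function.update X i (C a)) P with hR
    obtain ⟨Q, hQeq⟩ := dvd_sub_subst i a P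
    -- coeff of k in R is zero
    have hcoeffR : R.coeff (Finsupp.equivFunOnFinite.symm k) = 0 := by
      by_contra hc
      have h1 := monomial_le_degreeOf i (mem_support_iff.mpr hc)
      rw [subst_degreeOf, hmk, Nat.le_zero] at h1
      exact hki h1
    -- so P ≠ R and Q ≠ 0
    have hPRne : P - R ≠ 0 := by
      intro h
      have : P = R := by linear_combination (norm := ring_nf) h
      rw [this, hcoeffR] at hcoeff; exact hcoeff rfl
    have hQne : Q ≠ 0 := by
      rintro rfl; rw [mul_zero] at hQeq; exact hPRne hQeq
    -- degree bounds
    have hdegPR : (P - R).totalDegree ≤ ∑ j, k j := by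
      have h1 : (P - R).totalDegree ≤ max P.totalDegree R.totalDegree := by
        have : P - R = P + -R := by ring
        rw [this]
        refine le_trans (totalDegree_add _ _) ?_
        rw [totalDegree_neg]
      refine le_trans h1 (max_le (le_of_eq hdeg) ?_)
      exact le_trans (subst_deg_le i a P) (le_of_eq hdeg)
    have hdegQ : Q.totalDegree + 1 ≤ ∑ j, k j := by
      rw [← deg_factor_mul i a hQne, ← hQeq]; exact hdegPR
    -- define k'
    set k' : Fin n → ℕ := Function.update k i (k i - 1) with hk'
    have hk'i : k' i = k i - 1 := Function.update_self _ _ _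
    have hk'j : ∀ j, j ≠ i → k' j = k j := fun j hj => Function.update_of_ne hj _ _
    have hsumk' : ∑ j, k' j + 1 = ∑ j, k j := by
      rw [← Finset.sum_erase_add _ _ (Finset.mem_univ i),
        ← Finset.sum_erase_add _ _ (Finset.mem_univ i)]
      have h1 : ∑ j ∈ Finset.univ.erase i, k' j = ∑ j ∈ Finset.univ.erase i, k j :=
        Finset.sum_congr rfl fun j hj => hk'j j (Finset.ne_of_mem_erase hj)
      rw [h1, hk'i]; omega
    -- monomial split
    have hmsplit : (Finsupp.equivFunOnFinite.symm k)
        = Finsupp.single i 1 + Finsupp.equivFunOnFinite.symm k' := by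
      ext j
      rcases eq_or_ne j i with rfl | hj
      · simp [hmk, hk'i]; omega
      · simp [hmk, hk'j j hj, Finsupp.single_eq_of_ne' (Ne.symm hj)]
    -- coefficient of k' in Q
    have hcoeffQk : Q.coeff (Finsupp.equivFunOnFinite.symm k) = 0 := by
      apply coeff_eq_zero_of_totalDegree_lt
      have h1 : (∑ j ∈ (Finsupp.equivFunOnFinite.symm k).support,
          (Finsupp.equivFunOnFinite.symm k) j) = ∑ j, k j := by
        rw [support_sum_eq]; rfl
      omega
    -- coefficient of k' in Q equals coefficient of k in P
    have hcoeffQ : Q.coeff (Finsupp.equivFunOnFinite.symm k') ≠ 0 := by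
      have hc1 : (P - R).coeff (Finsupp.equivFunOnFinite.symm k)
          = P.coeff (Finsupp.equivFunOnFinite.symm k) := by
        rw [MvPolynomial.coeff_sub, hcoeffR, sub_zero]
      have hc2 : ((X i - C a) * Q).coeff (Finsupp.equivFunOnFinite.symm k)
          = Q.coeff (Finsupp.equivFunOnFinite.symm k') := by
        have : (X i - C a) * Q = X i * Q - C a * Q := by ring
        rw [this, MvPolynomial.coeff_sub, hmsplit, coeff_X_mul, ← hmsplit,
          MvPolynomial.coeff_C_mul, hcoeffQk, mul_zero, sub_zero]
      rw [← hc2, ← hQeq, hc1]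
      exact hcoeff
    have hdegQ' : Q.totalDegree = ∑ j, k' j := by
      apply le_antisymm
      · omega
      · have h1 := le_totalDegree (mem_support_iff.mpr hcoeffQ)
        have h2 : ((Finsupp.equivFunOnFinite.symm k').sum fun _ e => e) = ∑ j, k' j := by
          rw [finsupp_sum_eq]; rfl
        omega
    -- smaller grid
    set S' : Fin n → Finset F := Function.update S i ((S i).erase a) with hS'def
    have hS' : ∀ j, k' j < (S' j).card := by
      intro j
      rcases eq_or_ne j i with rfl | hj
      · rw [hS'def, Function.update_self, Finset.card_erase_of_mem ha, hk'i]
        have := hS j; omega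
      · rw [hS'def, Function.update_of_ne hj, hk'j j hj]
        exact hS j
    by_contra hcon
    push_neg at hcon
    obtain ⟨s, hs, hsQ⟩ := IH (∑ j, k' j) (by omega) k' rfl Q hcoeffQ hdegQ' S' hS'
    have hsi : s i ∈ (S i).erase a := by
      have := hs i; rwa [hS'def, Function.update_self] at this
    have hsS : ∀ j, s j ∈ S j := by
      intro j
      rcases eq_or_ne j i with rfl | hj
      · exact Finset.mem_of_mem_erase hsi
      · have := hs j; rwa [hS'def, Function.update_of_ne hj] at this
    have hP0 : MvPolynomial.eval s P = 0 := hcon s hsS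
    have hP0' : MvPolynomial.eval (Function.update s i a) P = 0 := by
      apply hcon
      intro j
      rcases eq_or_ne j i with rfl | hj
      · rw [Function.update_self]; exact ha
      · rw [Function.update_of_ne hj]; exact hsS j
    have hRs : MvPolynomial.eval s R = 0 := by
      rw [hR, subst_eval]; exact hP0'
    have hzero : (s i - a) * MvPolynomial.eval s Q = 0 := by
      have h := congrArg (MvPolynomial.eval s) hQeq
      rw [map_sub, map_mul, map_sub, eval_X, eval_C, hP0, hRs, sub_zero] at h
      exact h.symm
    have hne : s i - a ≠ 0 := sub_ne_zero_of_ne (Finset.mem_erase.mp hsi).1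
    exact hsQ (by
      rcases mul_eq_zero.mp hzero with h | h
      · exact absurd h hne
      · exact h)

end CNAux

/-- Alon's Combinatorial Nullstellensatz: if the coefficient of `∏ Xᵢ^{kᵢ}` in `P` is
nonzero and `deg P = Σ kᵢ`, then for any sets `Sᵢ` with `|Sᵢ| > kᵢ` there is a point of
`∏ Sᵢ` where `P` does not vanish. -/
theorem combinatorial_nullstellensatz {F : Type*} [Field F] {n : ℕ}
    (P : MvPolynomial (Fin n) F) (k : Fin n → ℕ)
    (hcoeff : P.coeff (Finsupp.equivFunOnFinite.symm k) ≠ 0)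
    (hdeg : P.totalDegree = ∑ i, k i)
    (S : Fin n → Finset F) (hS : ∀ i, k i < (S i).card) :
    ∃ s : Fin n → F, (∀ i, s i ∈ S i) ∧ MvPolynomial.eval s P ≠ 0 :=
  CNAux.aux (∑ i, k i) k rfl P hcoeff hdeg S hS
end

section
/- For every ℓ ≥ 1 there exists a plane graph G with 3-facial chromatic index exactly 3ℓ + 1; specifically, the graph obtained from a triangle with a vertex v joined to all three triangle vertices, where each of the three edges incident to v is subdivided into a path of length ℓ, requires 3ℓ + 1 colors in any ℓ-facial edge-coloring. In particular, every ℓ-facial edge-coloring of this graph uses at least 3ℓ + 1 colors because its 3ℓ + 1 edges are pairwise within facial-distance ℓ. -/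
/-- A plane (pseudo)graph, encoded as a combinatorial map: a finite set of darts `D`, a
fixed-point-free involution `α` pairing the two darts of each edge (loops and parallel
edges are allowed), and a rotation permutation `σ` whose orbits are the vertices; the
orbits of `σ * α` are the facial walks. Connectivity plus the Euler relation
`V - E + F = 2` (orbit counts of `σ`, `α`, `σ * α`) force genus 0, i.e. a plane
embedding. -/
structure PlaneMap where
  D : Type
  fD : Fintype D
  σ : Equiv.Perm D
  α : Equiv.Perm D
  αinvol : ∀ d, α (α d) = d
  αfixfree : ∀ d, α d ≠ d
  conn : ∀ d d' : D, d' ∈ MulAction.orbit (Subgroup.closure ({σ, α} : Set (Equiv.Perm D))) d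
  euler : (Nat.card (MulAction.orbitRel.Quotient (Subgroup.zpowers σ) D) : ℤ)
      - (Nat.card (MulAction.orbitRel.Quotient (Subgroup.zpowers α) D) : ℤ)
      + (Nat.card (MulAction.orbitRel.Quotient (Subgroup.zpowers (σ * α)) D) : ℤ) = 2

attribute [instance] PlaneMap.fD

/-- An `ℓ`-facial edge-coloring with `n` colors: a coloring of darts, constant on edges
(`c (α d) = c d`), such that any two *distinct* edges at distance at most `ℓ` along a
facial walk (an orbit of `σ * α`) receive distinct colors. The edge of the dart
`(σ * α) ^ j d` equals the edge of `d` iff it is `d` or `α d`. -/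
def PlaneMap.IsFacialEdgeColoring (M : PlaneMap) (ℓ n : ℕ) (c : M.D → Fin n) : Prop :=
  (∀ d, c (M.α d) = c d) ∧
  ∀ d : M.D, ∀ j ∈ Finset.Icc 1 ℓ,
    ((M.σ * M.α) ^ j) d ≠ d → ((M.σ * M.α) ^ j) d ≠ M.α d →
      c (((M.σ * M.α) ^ j) d) ≠ c d



namespace FECaux

open MulAction

/-- Generic orbit-counting: if `f` is a surjection onto `Fin m` whose fibers are exactly
the orbits of the permutation `π`, then `π` has `m` orbits. -/
lemma orbit_count {D : Type} (π : Equiv.Perm D) (m : ℕ) (f : D → Fin m)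
    (hconst : ∀ d, f (π d) = f d)
    (hsurj : Function.Surjective f)
    (hconn : ∀ d d', f d = f d' → ∃ k : ℕ, (π ^ k) d = d') :
    Nat.card (MulAction.orbitRel.Quotient (Subgroup.zpowers π) D) = m := by
  have hpowN : ∀ (k : ℕ) (d : D), f ((π ^ k) d) = f d := by
    intro k
    induction k with
    | zero => intro d; simp
    | succ n ih => intro d; rw [pow_succ]; simpa [Equiv.Perm.mul_apply] using (ih (π d)).trans (hconst d)
  have hinv : ∀ d, f (π⁻¹ d) = f d := by
    intro d
    conv_rhs => rw [← Equiv.apply_symm_apply π d]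
    exact (hconst (π⁻¹ d)).symm
  have hpowZ : ∀ (k : ℤ) (d : D), f ((π ^ k) d) = f d := by
    intro k d
    rcases k with n | n
    · simpa using hpowN n d
    · rw [Int.negSucc_eq, zpow_neg, ← inv_zpow]
      norm_cast
      have : ∀ (j : ℕ) (d : D), f ((π⁻¹ ^ j) d) = f d := by
        intro j
        induction j with
        | zero => intro d; simp
        | succ n ih => intro d; rw [pow_succ]; simpa [Equiv.Perm.mul_apply] using (ih (π⁻¹ d)).trans (hinv d)
      exact this _ d
  have hresp : ∀ (a b : D), (MulAction.orbitRel (Subgroup.zpowers π) D).r a b → f a = f b := by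
    intro a b hab
    obtain ⟨⟨g, k, hk⟩, hg⟩ := hab
    simp only at hg
    subst hk
    rw [← hg]
    exact hpowZ k b
  let F : MulAction.orbitRel.Quotient (Subgroup.zpowers π) D → Fin m :=
    Quot.lift f hresp
  have hFsurj : Function.Surjective F := by
    intro i
    obtain ⟨d, hd⟩ := hsurj i
    exact ⟨Quot.mk _ d, hd⟩
  have hFinj : Function.Injective F := by
    intro a b
    induction a using Quot.ind with | _ a =>
    induction b using Quot.ind with | _ b =>
    intro hab
    obtain ⟨k, hk⟩ := hconn a b hab
    exact (Quot.sound ⟨⟨π ^ k, ⟨(k : ℤ), by simp⟩⟩, hk⟩).symm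
  rw [Nat.card_eq_of_bijective F ⟨hFinj, hFsurj⟩]
  simp

variable (ℓ : ℕ)

/-- Darts of the theta graph `Θ(ℓ,ℓ,ℓ+1)` (two vertices joined by three internally
disjoint paths of lengths `ℓ`, `ℓ`, `ℓ+1`), grouped by the three faces, which have
lengths `2ℓ+1`, `2ℓ`, `2ℓ+1`. -/
abbrev Dart := ZMod (2*ℓ+1) ⊕ ZMod (2*ℓ) ⊕ ZMod (2*ℓ+1)

def dA (a : ℕ) : Dart ℓ := Sum.inl (a : ZMod (2*ℓ+1))
def dB (b : ℕ) : Dart ℓ := Sum.inr (Sum.inl (b : ZMod (2*ℓ)))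
def dC (c : ℕ) : Dart ℓ := Sum.inr (Sum.inr (c : ZMod (2*ℓ+1)))

/-- The edge-pairing involution. -/
def alphaFun : Dart ℓ → Dart ℓ
  | Sum.inl x => if x.val < ℓ then dB ℓ (2*ℓ-1-x.val) else dC ℓ (2*ℓ-x.val)
  | Sum.inr (Sum.inl x) => if x.val < ℓ then dC ℓ (2*ℓ-x.val) else dA ℓ (2*ℓ-1-x.val)
  | Sum.inr (Sum.inr x) => if x.val < ℓ+1 then dA ℓ (2*ℓ-x.val) else dB ℓ (2*ℓ-x.val)

/-- The face permutation: rotate by one in each face. -/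
def phi : Equiv.Perm (Dart ℓ) :=
  (Equiv.addRight (1 : ZMod (2*ℓ+1))).sumCongr
    ((Equiv.addRight (1 : ZMod (2*ℓ))).sumCongr (Equiv.addRight (1 : ZMod (2*ℓ+1))))

/-- Vertex index of the tail of a dart (vertices: `0` = hub `u`; `1..ℓ-1` interior of
path 1; `ℓ..2ℓ-2` interior of path 2; `2ℓ-1..3ℓ-2` interior of path 3; `3ℓ-1` = hub `v`). -/
def vIdxN : Dart ℓ → ℕ
  | Sum.inl x => if x.val < ℓ then x.val else if x.val = ℓ then 3*ℓ-1 else 4*ℓ-1-x.val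
  | Sum.inr (Sum.inl x) => if x.val = 0 then 0 else if x.val < ℓ then ℓ-1+x.val
      else if x.val = ℓ then 3*ℓ-1 else 2*ℓ-x.val
  | Sum.inr (Sum.inr x) => if x.val = 0 then 0 else if x.val ≤ ℓ then 2*ℓ-2+x.val
      else if x.val = ℓ+1 then 3*ℓ-1 else 3*ℓ-x.val

/-- Edge index of a dart (edges `0..ℓ-1` on path 1, `ℓ..2ℓ-1` on path 2, `2ℓ..3ℓ` on
path 3). -/
def eIdxN : Dart ℓ → ℕ
  | Sum.inl x => if x.val < ℓ then x.val else 4*ℓ-x.val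
  | Sum.inr (Sum.inl x) => if x.val < ℓ then ℓ+x.val else 2*ℓ-1-x.val
  | Sum.inr (Sum.inr x) => if x.val < ℓ+1 then 2*ℓ+x.val else 3*ℓ-x.val

/-- block index : which face a dart lies on. -/
def blockIdx : Dart ℓ → Fin 3
  | Sum.inl _ => 0
  | Sum.inr (Sum.inl _) => 1
  | Sum.inr (Sum.inr _) => 2

/-- Canonical dart at each vertex. -/
def canV (w : ℕ) : Dart ℓ :=
  if w = 0 then dA ℓ 0 else if w < ℓ then dA ℓ w else if w < 2*ℓ-1 then dB ℓ (w-ℓ+1)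
    else if w < 3*ℓ-1 then dC ℓ (w+2-2*ℓ) else dA ℓ ℓ

section

variable {ℓ}
set_option linter.unusedSectionVars false

lemma valA (a : ℕ) (h : a < 2*ℓ+1) : ((a : ZMod (2*ℓ+1))).val = a := ZMod.val_cast_of_lt h
lemma valB (b : ℕ) (h : b < 2*ℓ) : ((b : ZMod (2*ℓ))).val = b := by
  haveI : NeZero (2*ℓ) := ⟨by omega⟩
  exact ZMod.val_cast_of_lt h

lemma eta_A (x : ZMod (2*ℓ+1)) : (Sum.inl x : Dart ℓ) = dA ℓ x.val := by
  rw [dA, ZMod.natCast_val, ZMod.cast_id]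
lemma eta_B (hℓ : 1 ≤ ℓ) (x : ZMod (2*ℓ)) : (Sum.inr (Sum.inl x) : Dart ℓ) = dB ℓ x.val := by
  haveI : NeZero (2*ℓ) := ⟨by omega⟩
  rw [dB, ZMod.natCast_val, ZMod.cast_id]
lemma eta_C (x : ZMod (2*ℓ+1)) : (Sum.inr (Sum.inr x) : Dart ℓ) = dC ℓ x.val := by
  rw [dC, ZMod.natCast_val, ZMod.cast_id]

lemma dA_inj {a a' : ℕ} (h : a < 2*ℓ+1) (h' : a' < 2*ℓ+1) (e : dA ℓ a = dA ℓ a') : a = a' := by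
  rw [dA, dA] at e
  have := congrArg (ZMod.val) (Sum.inl.inj e)
  rwa [valA a h, valA a' h'] at this

lemma dB_inj {a a' : ℕ} (h : a < 2*ℓ) (h' : a' < 2*ℓ) (e : dB ℓ a = dB ℓ a') : a = a' := by
  rw [dB, dB] at e
  have := congrArg (ZMod.val) (Sum.inl.inj (Sum.inr.inj e))
  rwa [valB a h, valB a' h'] at this

lemma dC_inj {a a' : ℕ} (h : a < 2*ℓ+1) (h' : a' < 2*ℓ+1) (e : dC ℓ a = dC ℓ a') : a = a' := by
  rw [dC, dC] at e
  have := congrArg (ZMod.val) (Sum.inr.inj (Sum.inr.inj e))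
  rwa [valA a h, valA a' h'] at this

lemma dA_mod (a : ℕ) : dA ℓ ((a + (2*ℓ+1))) = dA ℓ a := by
  rw [dA, dA, Nat.cast_add, ZMod.natCast_self, add_zero]
lemma dB_mod (a : ℕ) : dB ℓ ((a + 2*ℓ)) = dB ℓ a := by
  rw [dB, dB, Nat.cast_add, ZMod.natCast_self, add_zero]
lemma dC_mod (a : ℕ) : dC ℓ ((a + (2*ℓ+1))) = dC ℓ a := by
  rw [dC, dC, Nat.cast_add, ZMod.natCast_self, add_zero]

lemma alpha_A_lo {a : ℕ} (h : a < ℓ) : alphaFun ℓ (dA ℓ a) = dB ℓ (2*ℓ-1-a) := by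
  rw [dA, alphaFun]; rw [valA a (by omega)]; simp [h]
lemma alpha_A_hi {a : ℕ} (h1 : ℓ ≤ a) (h2 : a < 2*ℓ+1) : alphaFun ℓ (dA ℓ a) = dC ℓ (2*ℓ-a) := by
  rw [dA, alphaFun]; rw [valA a h2]; simp [Nat.not_lt.mpr h1]
lemma alpha_B_lo {a : ℕ} (h : a < ℓ) : alphaFun ℓ (dB ℓ a) = dC ℓ (2*ℓ-a) := by
  rw [dB, alphaFun]; rw [valB a (by omega)]; simp [h]
lemma alpha_B_hi {a : ℕ} (h1 : ℓ ≤ a) (h2 : a < 2*ℓ) : alphaFun ℓ (dB ℓ a) = dA ℓ (2*ℓ-1-a) := by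
  rw [dB, alphaFun]; rw [valB a h2]; simp [Nat.not_lt.mpr h1]
lemma alpha_C_lo {a : ℕ} (h : a < ℓ+1) : alphaFun ℓ (dC ℓ a) = dA ℓ (2*ℓ-a) := by
  rw [dC, alphaFun]; rw [valA a (by omega)]; simp [h]
lemma alpha_C_hi {a : ℕ} (h1 : ℓ+1 ≤ a) (h2 : a < 2*ℓ+1) : alphaFun ℓ (dC ℓ a) = dB ℓ (2*ℓ-a) := by
  rw [dC, alphaFun]; rw [valA a h2]; simp [Nat.not_lt.mpr h1]

variable (hℓ : 1 ≤ ℓ)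
include hℓ

lemma alpha_invol : Function.Involutive (alphaFun ℓ) := by
  intro d
  rcases d with x | x | x
  · rw [eta_A x]
    set a := x.val with ha
    have hlt : a < 2*ℓ+1 := x.val_lt
    by_cases h : a < ℓ
    · rw [alpha_A_lo h, alpha_B_hi (by omega) (by omega)]
      congr 1; omega
    · rw [alpha_A_hi (by omega) hlt, alpha_C_lo (by omega)]
      congr 1; omega
  · haveI : NeZero (2*ℓ) := ⟨by omega⟩
    rw [eta_B hℓ x]
    set a := x.val with ha
    have hlt : a < 2*ℓ := x.val_lt
    by_cases h : a < ℓ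
    · rw [alpha_B_lo h, alpha_C_hi (by omega) (by omega)]
      congr 1; omega
    · rw [alpha_B_hi (by omega) hlt, alpha_A_lo (by omega)]
      congr 1; omega
  · rw [eta_C x]
    set a := x.val with ha
    have hlt : a < 2*ℓ+1 := x.val_lt
    by_cases h : a < ℓ+1
    · rw [alpha_C_lo h, alpha_A_hi (by omega) (by omega)]
      congr 1; omega
    · rw [alpha_C_hi (by omega) hlt, alpha_B_lo (by omega)]
      congr 1; omega

lemma alpha_fixfree : ∀ d, alphaFun ℓ d ≠ d := by
  intro d
  rcases d with x | x | x
  · rw [eta_A x]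
    by_cases h : x.val < ℓ
    · rw [alpha_A_lo h]; simp [dA, dB]
    · rw [alpha_A_hi (by omega) x.val_lt]; simp [dA, dC]
  · haveI : NeZero (2*ℓ) := ⟨by omega⟩
    rw [eta_B hℓ x]
    by_cases h : x.val < ℓ
    · rw [alpha_B_lo h]; simp [dB, dC]
    · rw [alpha_B_hi (by omega) x.val_lt]; simp [dA, dB]
  · rw [eta_C x]
    by_cases h : x.val < ℓ+1
    · rw [alpha_C_lo h]; simp [dA, dC]
    · rw [alpha_C_hi (by omega) x.val_lt]; simp [dB, dC]

omit hℓ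

lemma phi_dA (a : ℕ) : phi ℓ (dA ℓ a) = dA ℓ (a+1) := by simp [phi, dA]
lemma phi_dB (a : ℕ) : phi ℓ (dB ℓ a) = dB ℓ (a+1) := by simp [phi, dB]
lemma phi_dC (a : ℕ) : phi ℓ (dC ℓ a) = dC ℓ (a+1) := by simp [phi, dC]

lemma phipow_dA (j a : ℕ) : (phi ℓ ^ j) (dA ℓ a) = dA ℓ (a+j) := by
  induction j generalizing a with
  | zero => simp
  | succ n ih => rw [pow_succ, Equiv.Perm.mul_apply, phi_dA, ih]; congr 1; omega
lemma phipow_dB (j a : ℕ) : (phi ℓ ^ j) (dB ℓ a) = dB ℓ (a+j) := by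
  induction j generalizing a with
  | zero => simp
  | succ n ih => rw [pow_succ, Equiv.Perm.mul_apply, phi_dB, ih]; congr 1; omega
lemma phipow_dC (j a : ℕ) : (phi ℓ ^ j) (dC ℓ a) = dC ℓ (a+j) := by
  induction j generalizing a with
  | zero => simp
  | succ n ih => rw [pow_succ, Equiv.Perm.mul_apply, phi_dC, ih]; congr 1; omega

end

/-- The edge involution as a permutation. -/
def alphaE (hℓ : 1 ≤ ℓ) : Equiv.Perm (Dart ℓ) := (alpha_invol hℓ).toPerm

/-- The vertex rotation permutation. -/
def sigma (hℓ : 1 ≤ ℓ) : Equiv.Perm (Dart ℓ) := phi ℓ * alphaE ℓ hℓ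

section
variable {ℓ} (hℓ : 1 ≤ ℓ)
set_option linter.unusedSectionVars false
set_option linter.unnecessarySeqFocus false

lemma alphaE_apply (d : Dart ℓ) : alphaE ℓ hℓ d = alphaFun ℓ d := rfl

lemma sigma_mul_alpha : sigma ℓ hℓ * alphaE ℓ hℓ = phi ℓ := by
  rw [sigma, mul_assoc]
  convert mul_one (phi ℓ)
  ext d
  exact alpha_invol hℓ d

lemma sigma_apply (d : Dart ℓ) : sigma ℓ hℓ d = phi ℓ (alphaFun ℓ d) := rfl

lemma sigma_A_lo {a : ℕ} (h : a < ℓ) : sigma ℓ hℓ (dA ℓ a) = dB ℓ (2*ℓ-a) := by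
  rw [sigma_apply hℓ, alpha_A_lo h, phi_dB]; congr 1; omega
lemma sigma_A_hi {a : ℕ} (h1 : ℓ ≤ a) (h2 : a < 2*ℓ+1) :
    sigma ℓ hℓ (dA ℓ a) = dC ℓ (2*ℓ+1-a) := by
  rw [sigma_apply hℓ, alpha_A_hi h1 h2, phi_dC]; congr 1; omega
lemma sigma_B_lo {a : ℕ} (h : a < ℓ) : sigma ℓ hℓ (dB ℓ a) = dC ℓ (2*ℓ+1-a) := by
  rw [sigma_apply hℓ, alpha_B_lo h, phi_dC]; congr 1; omega
lemma sigma_B_hi {a : ℕ} (h1 : ℓ ≤ a) (h2 : a < 2*ℓ) :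
    sigma ℓ hℓ (dB ℓ a) = dA ℓ (2*ℓ-a) := by
  rw [sigma_apply hℓ, alpha_B_hi h1 h2, phi_dA]; congr 1; omega
lemma sigma_C_lo {a : ℕ} (h : a < ℓ+1) : sigma ℓ hℓ (dC ℓ a) = dA ℓ (2*ℓ+1-a) := by
  rw [sigma_apply hℓ, alpha_C_lo h, phi_dA]; congr 1; omega
lemma sigma_C_hi {a : ℕ} (h1 : ℓ+1 ≤ a) (h2 : a < 2*ℓ+1) :
    sigma ℓ hℓ (dC ℓ a) = dB ℓ (2*ℓ+1-a) := by
  rw [sigma_apply hℓ, alpha_C_hi h1 h2, phi_dB]; congr 1; omega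

-- spec lemmas for the index functions, at natural number arguments
lemma vIdx_dA {a : ℕ} (h : a < 2*ℓ+1) :
    vIdxN ℓ (dA ℓ a) = if a < ℓ then a else if a = ℓ then 3*ℓ-1 else 4*ℓ-1-a := by
  rw [dA, vIdxN, valA a h]
lemma vIdx_dB {a : ℕ} (h : a < 2*ℓ) :
    vIdxN ℓ (dB ℓ a) = if a = 0 then 0 else if a < ℓ then ℓ-1+a
      else if a = ℓ then 3*ℓ-1 else 2*ℓ-a := by
  rw [dB, vIdxN, valB a h]
lemma vIdx_dC {a : ℕ} (h : a < 2*ℓ+1) :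
    vIdxN ℓ (dC ℓ a) = if a = 0 then 0 else if a ≤ ℓ then 2*ℓ-2+a
      else if a = ℓ+1 then 3*ℓ-1 else 3*ℓ-a := by
  rw [dC, vIdxN, valA a h]

lemma eIdx_dA {a : ℕ} (h : a < 2*ℓ+1) :
    eIdxN ℓ (dA ℓ a) = if a < ℓ then a else 4*ℓ-a := by
  rw [dA, eIdxN, valA a h]
lemma eIdx_dB {a : ℕ} (h : a < 2*ℓ) :
    eIdxN ℓ (dB ℓ a) = if a < ℓ then ℓ+a else 2*ℓ-1-a := by
  rw [dB, eIdxN, valB a h]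
lemma eIdx_dC {a : ℕ} (h : a < 2*ℓ+1) :
    eIdxN ℓ (dC ℓ a) = if a < ℓ+1 then 2*ℓ+a else 3*ℓ-a := by
  rw [dC, eIdxN, valA a h]

include hℓ

lemma vIdx_lt (d : Dart ℓ) : vIdxN ℓ d < 3*ℓ := by
  haveI : NeZero (2*ℓ) := ⟨by omega⟩
  rcases d with x | x | x
  · rw [eta_A x, vIdx_dA x.val_lt]
    have := x.val_lt; split_ifs <;> omega
  · rw [eta_B hℓ x, vIdx_dB x.val_lt]
    have := x.val_lt; split_ifs <;> omega
  · rw [eta_C x, vIdx_dC x.val_lt]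
    have := x.val_lt; split_ifs <;> omega

lemma eIdx_lt (d : Dart ℓ) : eIdxN ℓ d < 3*ℓ+1 := by
  haveI : NeZero (2*ℓ) := ⟨by omega⟩
  rcases d with x | x | x
  · rw [eta_A x, eIdx_dA x.val_lt]
    have := x.val_lt; split_ifs <;> omega
  · rw [eta_B hℓ x, eIdx_dB x.val_lt]
    have := x.val_lt; split_ifs <;> omega
  · rw [eta_C x, eIdx_dC x.val_lt]
    have := x.val_lt; split_ifs <;> omega

lemma eIdx_alpha (d : Dart ℓ) : eIdxN ℓ (alphaFun ℓ d) = eIdxN ℓ d := by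
  haveI : NeZero (2*ℓ) := ⟨by omega⟩
  rcases d with x | x | x
  · rw [eta_A x]
    have ha2 := x.val_lt
    by_cases ha : x.val < ℓ
    · rw [alpha_A_lo ha, eIdx_dB (by omega), eIdx_dA ha2]
      split_ifs <;> omega
    · rw [alpha_A_hi (by omega) ha2, eIdx_dC (by omega), eIdx_dA ha2]
      split_ifs <;> omega
  · rw [eta_B hℓ x]
    have ha2 := x.val_lt
    by_cases ha : x.val < ℓ
    · rw [alpha_B_lo ha, eIdx_dC (by omega), eIdx_dB ha2]
      split_ifs <;> omega
    · rw [alpha_B_hi (by omega) ha2, eIdx_dA (by omega), eIdx_dB ha2]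
      split_ifs <;> omega
  · rw [eta_C x]
    have ha2 := x.val_lt
    by_cases ha : x.val < ℓ+1
    · rw [alpha_C_lo ha, eIdx_dA (by omega), eIdx_dC ha2]
      split_ifs <;> omega
    · rw [alpha_C_hi (by omega) ha2, eIdx_dB (by omega), eIdx_dC ha2]
      split_ifs <;> omega

lemma eIdx_fiber {d d' : Dart ℓ} (h : eIdxN ℓ d = eIdxN ℓ d') :
    d' = d ∨ d' = alphaFun ℓ d := by
  haveI : NeZero (2*ℓ) := ⟨by omega⟩
  rcases d with x | x | x <;> rcases d' with y | y | y
  · rw [eta_A x] at h ⊢; rw [eta_A y] at h ⊢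
    have ha2 := x.val_lt; have hb2 := y.val_lt
    rw [eIdx_dA ha2, eIdx_dA hb2] at h
    split_ifs at h with h1 h2 h3
    · left; exact congrArg _ h.symm
    · exfalso; omega
    · exfalso; omega
    · left; exact congrArg _ (by omega)
  · rw [eta_A x] at h ⊢; rw [eta_B hℓ y] at h ⊢
    have ha2 := x.val_lt; have hb2 := y.val_lt
    rw [eIdx_dA ha2, eIdx_dB hb2] at h
    split_ifs at h with h1 h2 h3
    · exfalso; omega
    · right; rw [alpha_A_lo h1]; exact congrArg _ (by omega)
    · exfalso; omega
    · exfalso; omega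
  · rw [eta_A x] at h ⊢; rw [eta_C y] at h ⊢
    have ha2 := x.val_lt; have hb2 := y.val_lt
    rw [eIdx_dA ha2, eIdx_dC hb2] at h
    split_ifs at h with h1 h2 h3
    · exfalso; omega
    · exfalso; omega
    · right; rw [alpha_A_hi (by omega) ha2]; exact congrArg _ (by omega)
    · exfalso; omega
  · rw [eta_B hℓ x] at h ⊢; rw [eta_A y] at h ⊢
    have ha2 := x.val_lt; have hb2 := y.val_lt
    rw [eIdx_dB ha2, eIdx_dA hb2] at h
    split_ifs at h with h1 h2 h3
    · exfalso; omega
    · exfalso; omega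
    · right; rw [alpha_B_hi (by omega) ha2]; exact congrArg _ (by omega)
    · exfalso; omega
  · rw [eta_B hℓ x] at h ⊢; rw [eta_B hℓ y] at h ⊢
    have ha2 := x.val_lt; have hb2 := y.val_lt
    rw [eIdx_dB ha2, eIdx_dB hb2] at h
    split_ifs at h with h1 h2 h3
    · left; exact congrArg _ (by omega)
    · exfalso; omega
    · exfalso; omega
    · left; exact congrArg _ (by omega)
  · rw [eta_B hℓ x] at h ⊢; rw [eta_C y] at h ⊢
    have ha2 := x.val_lt; have hb2 := y.val_lt
    rw [eIdx_dB ha2, eIdx_dC hb2] at h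
    split_ifs at h with h1 h2 h3
    · exfalso; omega
    · right; rw [alpha_B_lo h1]; exact congrArg _ (by omega)
    · exfalso; omega
    · exfalso; omega
  · rw [eta_C x] at h ⊢; rw [eta_A y] at h ⊢
    have ha2 := x.val_lt; have hb2 := y.val_lt
    rw [eIdx_dC ha2, eIdx_dA hb2] at h
    split_ifs at h with h1 h2 h3
    · exfalso; omega
    · right; rw [alpha_C_lo h1]; exact congrArg _ (by omega)
    · exfalso; omega
    · exfalso; omega
  · rw [eta_C x] at h ⊢; rw [eta_B hℓ y] at h ⊢
    have ha2 := x.val_lt; have hb2 := y.val_lt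
    rw [eIdx_dC ha2, eIdx_dB hb2] at h
    split_ifs at h with h1 h2 h3
    · exfalso; omega
    · exfalso; omega
    · right; rw [alpha_C_hi (by omega) ha2]; exact congrArg _ (by omega)
    · exfalso; omega
  · rw [eta_C x] at h ⊢; rw [eta_C y] at h ⊢
    have ha2 := x.val_lt; have hb2 := y.val_lt
    rw [eIdx_dC ha2, eIdx_dC hb2] at h
    split_ifs at h with h1 h2 h3
    · left; exact congrArg _ (by omega)
    · exfalso; omega
    · exfalso; omega
    · left; exact congrArg _ (by omega)

lemma vIdx_sigma (d : Dart ℓ) : vIdxN ℓ (sigma ℓ hℓ d) = vIdxN ℓ d := by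
  haveI : NeZero (2*ℓ) := ⟨by omega⟩
  rcases d with x | x | x
  · rw [eta_A x]
    have ha2 := x.val_lt
    by_cases ha : x.val < ℓ
    · rw [sigma_A_lo hℓ ha]
      by_cases haz : x.val = 0
      · rw [show 2*ℓ-x.val = 0+2*ℓ by omega, dB_mod, vIdx_dB (by omega), vIdx_dA ha2]
        split_ifs <;> omega
      · rw [vIdx_dB (by omega), vIdx_dA ha2]
        split_ifs <;> omega
    · rw [sigma_A_hi hℓ (by omega) ha2, vIdx_dC (by omega), vIdx_dA ha2]
      split_ifs <;> omega
  · rw [eta_B hℓ x]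
    have ha2 := x.val_lt
    by_cases ha : x.val < ℓ
    · rw [sigma_B_lo hℓ ha]
      by_cases haz : x.val = 0
      · rw [show 2*ℓ+1-x.val = 0+(2*ℓ+1) by omega, dC_mod, vIdx_dC (by omega), vIdx_dB ha2]
        split_ifs <;> omega
      · rw [vIdx_dC (by omega), vIdx_dB ha2]
        split_ifs <;> omega
    · rw [sigma_B_hi hℓ (by omega) ha2, vIdx_dA (by omega), vIdx_dB ha2]
      split_ifs <;> omega
  · rw [eta_C x]
    have ha2 := x.val_lt
    by_cases ha : x.val < ℓ+1
    · rw [sigma_C_lo hℓ ha]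
      by_cases haz : x.val = 0
      · rw [show 2*ℓ+1-x.val = 0+(2*ℓ+1) by omega, dA_mod, vIdx_dA (by omega), vIdx_dC ha2]
        split_ifs <;> omega
      · rw [vIdx_dA (by omega), vIdx_dC ha2]
        split_ifs <;> omega
    · rw [sigma_C_hi hℓ (by omega) ha2, vIdx_dB (by omega), vIdx_dC ha2]
      split_ifs <;> omega

lemma canV_eval {w t : ℕ} (hw : w = t) : canV ℓ w = canV ℓ t := by rw [hw]

lemma sigma_sq (d : Dart ℓ) : (sigma ℓ hℓ ^ 2) d = sigma ℓ hℓ (sigma ℓ hℓ d) := by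
  rw [pow_two, Equiv.Perm.mul_apply]

lemma canV_0 : canV ℓ 0 = dA ℓ 0 := by rw [canV]; simp

lemma canV_x {w : ℕ} (h1 : 1 ≤ w) (h2 : w < ℓ) : canV ℓ w = dA ℓ w := by
  rw [canV]; split_ifs <;> first | rfl | (exfalso; omega)

lemma canV_y {w : ℕ} (h1 : ℓ ≤ w) (h2 : w < 2*ℓ-1) : canV ℓ w = dB ℓ (w-ℓ+1) := by
  rw [canV]; split_ifs <;> first | rfl | (exfalso; omega)

lemma canV_z {w : ℕ} (h1 : 2*ℓ-1 ≤ w) (h2 : w < 3*ℓ-1) : canV ℓ w = dC ℓ (w+2-2*ℓ) := by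
  rw [canV]; split_ifs <;> first | rfl | (exfalso; omega)

lemma canV_v : canV ℓ (3*ℓ-1) = dA ℓ ℓ := by
  rw [canV]; split_ifs <;> first | rfl | (exfalso; omega)

/-- every dart flows down (by a power of `σ`) to the canonical dart of its vertex. -/
lemma canV_down (d : Dart ℓ) : ∃ k : ℕ, (sigma ℓ hℓ ^ k) d = canV ℓ (vIdxN ℓ d) := by
  haveI : NeZero (2*ℓ) := ⟨by omega⟩
  rcases d with x | x | x
  · rw [eta_A x]
    have ha2 := x.val_lt
    set a := x.val with haa
    by_cases haz : a = 0
    · refine ⟨0, ?_⟩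
      have hv : vIdxN ℓ (dA ℓ a) = 0 := by rw [vIdx_dA ha2]; split_ifs <;> omega
      rw [pow_zero, Equiv.Perm.one_apply, hv, canV_0 hℓ]; exact congrArg _ (by omega)
    · by_cases ha : a < ℓ
      · refine ⟨0, ?_⟩
        have hv : vIdxN ℓ (dA ℓ a) = a := by rw [vIdx_dA ha2]; split_ifs <;> omega
        rw [pow_zero, Equiv.Perm.one_apply, hv, canV_x hℓ (by omega) (by omega)]
      · by_cases hv' : a = ℓ
        · refine ⟨0, ?_⟩
          have hv : vIdxN ℓ (dA ℓ a) = 3*ℓ-1 := by rw [vIdx_dA ha2]; split_ifs <;> omega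
          rw [pow_zero, Equiv.Perm.one_apply, hv, canV_v hℓ]; exact congrArg _ (by omega)
        · refine ⟨1, ?_⟩
          have hv : vIdxN ℓ (dA ℓ a) = 4*ℓ-1-a := by rw [vIdx_dA ha2]; split_ifs <;> omega
          rw [pow_one, hv, canV_z hℓ (by omega) (by omega), sigma_A_hi hℓ (by omega) ha2]
          exact congrArg _ (by omega)
  · rw [eta_B hℓ x]
    have ha2 := x.val_lt
    set a := x.val with haa
    by_cases haz : a = 0
    · -- hub u : σ²(B 0) = A 0
      refine ⟨2, ?_⟩
      have hv : vIdxN ℓ (dB ℓ a) = 0 := by rw [vIdx_dB ha2]; split_ifs <;> omega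
      rw [hv, canV_0 hℓ, sigma_sq hℓ, sigma_B_lo hℓ (by omega),
        show 2*ℓ+1-a = 0+(2*ℓ+1) by omega, dC_mod, sigma_C_lo hℓ (by omega),
        show 2*ℓ+1-0 = 0+(2*ℓ+1) by omega, dA_mod]
    · by_cases ha : a < ℓ
      · refine ⟨0, ?_⟩
        have hv : vIdxN ℓ (dB ℓ a) = ℓ-1+a := by rw [vIdx_dB ha2]; split_ifs <;> omega
        rw [pow_zero, Equiv.Perm.one_apply, hv, canV_y hℓ (by omega) (by omega)]
        exact congrArg _ (by omega)
      · by_cases hv' : a = ℓ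
        · refine ⟨1, ?_⟩
          have hv : vIdxN ℓ (dB ℓ a) = 3*ℓ-1 := by rw [vIdx_dB ha2]; split_ifs <;> omega
          rw [pow_one, hv, canV_v hℓ, sigma_B_hi hℓ (by omega) ha2]
          exact congrArg _ (by omega)
        · refine ⟨1, ?_⟩
          have hv : vIdxN ℓ (dB ℓ a) = 2*ℓ-a := by rw [vIdx_dB ha2]; split_ifs <;> omega
          rw [pow_one, hv, canV_x hℓ (by omega) (by omega), sigma_B_hi hℓ (by omega) ha2]
  · rw [eta_C x]
    have ha2 := x.val_lt
    set a := x.val with haa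
    by_cases haz : a = 0
    · refine ⟨1, ?_⟩
      have hv : vIdxN ℓ (dC ℓ a) = 0 := by rw [vIdx_dC ha2]; split_ifs <;> omega
      rw [pow_one, hv, canV_0 hℓ, sigma_C_lo hℓ (by omega),
        show 2*ℓ+1-a = 0+(2*ℓ+1) by omega, dA_mod]
    · by_cases ha : a ≤ ℓ
      · refine ⟨0, ?_⟩
        have hv : vIdxN ℓ (dC ℓ a) = 2*ℓ-2+a := by rw [vIdx_dC ha2]; split_ifs <;> omega
        rw [pow_zero, Equiv.Perm.one_apply, hv, canV_z hℓ (by omega) (by omega)]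
        exact congrArg _ (by omega)
      · by_cases hv' : a = ℓ+1
        · -- hub v : σ²(C (ℓ+1)) = σ(B ℓ) = A ℓ
          refine ⟨2, ?_⟩
          have hv : vIdxN ℓ (dC ℓ a) = 3*ℓ-1 := by rw [vIdx_dC ha2]; split_ifs <;> omega
          rw [hv, canV_v hℓ, sigma_sq hℓ, sigma_C_hi hℓ (by omega) ha2,
            show 2*ℓ+1-a = ℓ by omega, sigma_B_hi hℓ (by omega) (by omega)]
          exact congrArg _ (by omega)
        · refine ⟨1, ?_⟩
          have hv : vIdxN ℓ (dC ℓ a) = 3*ℓ-a := by rw [vIdx_dC ha2]; split_ifs <;> omega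
          rw [pow_one, hv, canV_y hℓ (by omega) (by omega), sigma_C_hi hℓ (by omega) ha2]
          exact congrArg _ (by omega)

/-- every dart is reached (by a power of `σ`) from the canonical dart of its vertex. -/
lemma canV_up (d : Dart ℓ) : ∃ k : ℕ, (sigma ℓ hℓ ^ k) (canV ℓ (vIdxN ℓ d)) = d := by
  haveI : NeZero (2*ℓ) := ⟨by omega⟩
  rcases d with x | x | x
  · rw [eta_A x]
    have ha2 := x.val_lt
    set a := x.val with haa
    by_cases haz : a = 0
    · refine ⟨0, ?_⟩
      have hv : vIdxN ℓ (dA ℓ a) = 0 := by rw [vIdx_dA ha2]; split_ifs <;> omega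
      rw [pow_zero, Equiv.Perm.one_apply, hv, canV_0 hℓ]; exact congrArg _ (by omega)
    · by_cases ha : a < ℓ
      · refine ⟨0, ?_⟩
        have hv : vIdxN ℓ (dA ℓ a) = a := by rw [vIdx_dA ha2]; split_ifs <;> omega
        rw [pow_zero, Equiv.Perm.one_apply, hv, canV_x hℓ (by omega) (by omega)]
      · by_cases hv' : a = ℓ
        · refine ⟨0, ?_⟩
          have hv : vIdxN ℓ (dA ℓ a) = 3*ℓ-1 := by rw [vIdx_dA ha2]; split_ifs <;> omega
          rw [pow_zero, Equiv.Perm.one_apply, hv, canV_v hℓ]; exact congrArg _ (by omega)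
        · -- canonical is dC (2ℓ+1-a), index in [1,ℓ]
          refine ⟨1, ?_⟩
          have hv : vIdxN ℓ (dA ℓ a) = 4*ℓ-1-a := by rw [vIdx_dA ha2]; split_ifs <;> omega
          rw [pow_one, hv, canV_z hℓ (by omega) (by omega),
            show 4*ℓ-1-a+2-2*ℓ = 2*ℓ+1-a by omega, sigma_C_lo hℓ (by omega)]
          exact congrArg _ (by omega)
  · rw [eta_B hℓ x]
    have ha2 := x.val_lt
    set a := x.val with haa
    by_cases haz : a = 0
    · refine ⟨1, ?_⟩
      have hv : vIdxN ℓ (dB ℓ a) = 0 := by rw [vIdx_dB ha2]; split_ifs <;> omega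
      rw [pow_one, hv, canV_0 hℓ, sigma_A_lo hℓ (by omega),
        show 2*ℓ-0 = 0+2*ℓ by omega, dB_mod]
      exact congrArg _ (by omega)
    · by_cases ha : a < ℓ
      · refine ⟨0, ?_⟩
        have hv : vIdxN ℓ (dB ℓ a) = ℓ-1+a := by rw [vIdx_dB ha2]; split_ifs <;> omega
        rw [pow_zero, Equiv.Perm.one_apply, hv, canV_y hℓ (by omega) (by omega)]
        exact congrArg _ (by omega)
      · by_cases hv' : a = ℓ
        · -- hub v : σ²(A ℓ) = σ(C (ℓ+1)) = B ℓ
          refine ⟨2, ?_⟩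
          have hv : vIdxN ℓ (dB ℓ a) = 3*ℓ-1 := by rw [vIdx_dB ha2]; split_ifs <;> omega
          rw [hv, canV_v hℓ, sigma_sq hℓ, sigma_A_hi hℓ (by omega) (by omega),
            show 2*ℓ+1-ℓ = ℓ+1 by omega, sigma_C_hi hℓ (by omega) (by omega)]
          exact congrArg _ (by omega)
        · -- interior of path 1 : canonical A (2ℓ-a)
          refine ⟨1, ?_⟩
          have hv : vIdxN ℓ (dB ℓ a) = 2*ℓ-a := by rw [vIdx_dB ha2]; split_ifs <;> omega
          rw [pow_one, hv, canV_x hℓ (by omega) (by omega), sigma_A_lo hℓ (by omega)]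
          exact congrArg _ (by omega)
  · rw [eta_C x]
    have ha2 := x.val_lt
    set a := x.val with haa
    by_cases haz : a = 0
    · refine ⟨2, ?_⟩
      have hv : vIdxN ℓ (dC ℓ a) = 0 := by rw [vIdx_dC ha2]; split_ifs <;> omega
      rw [hv, canV_0 hℓ, sigma_sq hℓ, sigma_A_lo hℓ (by omega),
        show 2*ℓ-0 = 0+2*ℓ by omega, dB_mod, sigma_B_lo hℓ (by omega),
        show 2*ℓ+1-0 = 0+(2*ℓ+1) by omega, dC_mod]
      exact congrArg _ (by omega)
    · by_cases ha : a ≤ ℓ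
      · refine ⟨0, ?_⟩
        have hv : vIdxN ℓ (dC ℓ a) = 2*ℓ-2+a := by rw [vIdx_dC ha2]; split_ifs <;> omega
        rw [pow_zero, Equiv.Perm.one_apply, hv, canV_z hℓ (by omega) (by omega)]
        exact congrArg _ (by omega)
      · by_cases hv' : a = ℓ+1
        · refine ⟨1, ?_⟩
          have hv : vIdxN ℓ (dC ℓ a) = 3*ℓ-1 := by rw [vIdx_dC ha2]; split_ifs <;> omega
          rw [pow_one, hv, canV_v hℓ, sigma_A_hi hℓ (by omega) (by omega)]
          exact congrArg _ (by omega)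
        · -- interior of path 2 : canonical B (2ℓ+1-a), index in [1,ℓ-1]
          refine ⟨1, ?_⟩
          have hv : vIdxN ℓ (dC ℓ a) = 3*ℓ-a := by rw [vIdx_dC ha2]; split_ifs <;> omega
          rw [pow_one, hv, canV_y hℓ (by omega) (by omega),
            show 3*ℓ-a-ℓ+1 = 2*ℓ+1-a by omega, sigma_B_lo hℓ (by omega)]
          exact congrArg _ (by omega)

lemma canV_vIdx {w : ℕ} (hw : w < 3*ℓ) : vIdxN ℓ (canV ℓ w) = w := by
  by_cases h0 : w = 0
  · subst h0; rw [canV_0 hℓ, vIdx_dA (by omega)]; split_ifs <;> omega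
  · by_cases h1 : w < ℓ
    · rw [canV_x hℓ (by omega) h1, vIdx_dA (by omega)]; split_ifs <;> omega
    · by_cases h2 : w < 2*ℓ-1
      · rw [canV_y hℓ (by omega) h2, vIdx_dB (by omega)]; split_ifs <;> first | exact (‹False›).elim | omega
      · by_cases h3 : w < 3*ℓ-1
        · rw [canV_z hℓ (by omega) h3, vIdx_dC (by omega)]; split_ifs <;> omega
        · rw [show w = 3*ℓ-1 by omega, canV_v hℓ, vIdx_dA (by omega)]
          split_ifs <;> omega

lemma count_sigma :
    Nat.card (MulAction.orbitRel.Quotient (Subgroup.zpowers (sigma ℓ hℓ)) (Dart ℓ)) = 3*ℓ := by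
  apply orbit_count (sigma ℓ hℓ) (3*ℓ) (fun d => ⟨vIdxN ℓ d, vIdx_lt hℓ d⟩)
  · intro d; exact Fin.ext (vIdx_sigma hℓ d)
  · rintro ⟨w, hw⟩
    exact ⟨canV ℓ w, Fin.ext (canV_vIdx hℓ hw)⟩
  · intro d d' h
    have hv : vIdxN ℓ d = vIdxN ℓ d' := congrArg Fin.val h
    obtain ⟨k1, hk1⟩ := canV_down hℓ d
    obtain ⟨k2, hk2⟩ := canV_up hℓ d'
    refine ⟨k2 + k1, ?_⟩
    rw [pow_add, Equiv.Perm.mul_apply, hk1, hv, hk2]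

lemma count_alpha :
    Nat.card (MulAction.orbitRel.Quotient (Subgroup.zpowers (alphaE ℓ hℓ)) (Dart ℓ)) = 3*ℓ+1 := by
  apply orbit_count (alphaE ℓ hℓ) (3*ℓ+1) (fun d => ⟨eIdxN ℓ d, eIdx_lt hℓ d⟩)
  · intro d; exact Fin.ext (eIdx_alpha hℓ d)
  · rintro ⟨i, hi⟩
    by_cases h1 : i < ℓ
    · refine ⟨dA ℓ i, Fin.ext ?_⟩
      show eIdxN ℓ (dA ℓ i) = i
      rw [eIdx_dA (by omega)]; split_ifs <;> omega
    · by_cases h2 : i < 2*ℓ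
      · refine ⟨dB ℓ (i-ℓ), Fin.ext ?_⟩
        show eIdxN ℓ (dB ℓ (i-ℓ)) = i
        rw [eIdx_dB (by omega)]; split_ifs <;> omega
      · refine ⟨dC ℓ (i-2*ℓ), Fin.ext ?_⟩
        show eIdxN ℓ (dC ℓ (i-2*ℓ)) = i
        rw [eIdx_dC (by omega)]; split_ifs <;> omega
  · intro d d' h
    have he : eIdxN ℓ d = eIdxN ℓ d' := congrArg Fin.val h
    rcases eIdx_fiber hℓ he with h' | h'
    · exact ⟨0, by rw [pow_zero]; exact h'.symm⟩
    · exact ⟨1, by rw [pow_one]; exact h'.symm⟩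

lemma count_phi :
    Nat.card (MulAction.orbitRel.Quotient (Subgroup.zpowers (phi ℓ)) (Dart ℓ)) = 3 := by
  haveI : NeZero (2*ℓ) := ⟨by omega⟩
  apply orbit_count (phi ℓ) 3 (blockIdx ℓ)
  · intro d; rcases d with x | x | x <;> rfl
  · intro i
    fin_cases i
    · exact ⟨dA ℓ 0, rfl⟩
    · exact ⟨dB ℓ 0, rfl⟩
    · exact ⟨dC ℓ 0, rfl⟩
  · intro d d' h
    rcases d with x | x | x <;> rcases d' with y | y | y <;> simp [blockIdx] at h ⊢
    · refine ⟨(2*ℓ+1) - x.val + y.val, ?_⟩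
      rw [eta_A x, eta_A y, phipow_dA, show x.val + ((2*ℓ+1) - x.val + y.val) = y.val + (2*ℓ+1) by
        have := x.val_lt; omega, dA_mod]
    · refine ⟨2*ℓ - x.val + y.val, ?_⟩
      rw [eta_B hℓ x, eta_B hℓ y, phipow_dB, show x.val + (2*ℓ - x.val + y.val) = y.val + 2*ℓ by
        have := x.val_lt; omega, dB_mod]
    · refine ⟨(2*ℓ+1) - x.val + y.val, ?_⟩
      rw [eta_C x, eta_C y, phipow_dC, show x.val + ((2*ℓ+1) - x.val + y.val) = y.val + (2*ℓ+1) by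
        have := x.val_lt; omega, dC_mod]

lemma conn_theta (d d' : Dart ℓ) :
    d' ∈ MulAction.orbit
      (Subgroup.closure ({sigma ℓ hℓ, alphaE ℓ hℓ} : Set (Equiv.Perm (Dart ℓ)))) d := by
  haveI : NeZero (2*ℓ) := ⟨by omega⟩
  set H := Subgroup.closure ({sigma ℓ hℓ, alphaE ℓ hℓ} : Set (Equiv.Perm (Dart ℓ))) with hH
  have hσ : sigma ℓ hℓ ∈ H := Subgroup.subset_closure (by simp)
  have hα : alphaE ℓ hℓ ∈ H := Subgroup.subset_closure (by simp)
  have hφ : phi ℓ ∈ H := by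
    have : phi ℓ = sigma ℓ hℓ * alphaE ℓ hℓ := (sigma_mul_alpha hℓ).symm
    rw [this]; exact mul_mem hσ hα
  have reach : ∀ e : Dart ℓ, ∃ g : Equiv.Perm (Dart ℓ), g ∈ H ∧ g (dA ℓ 0) = e := by
    intro e
    rcases e with x | x | x
    · refine ⟨phi ℓ ^ x.val, pow_mem hφ _, ?_⟩
      rw [phipow_dA, zero_add, eta_A x]
    · refine ⟨phi ℓ ^ (x.val + ℓ) * alphaE ℓ hℓ * phi ℓ ^ (ℓ-1), mul_mem (mul_mem (pow_mem hφ _) hα) (pow_mem hφ _), ?_⟩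
      rw [Equiv.Perm.mul_apply, Equiv.Perm.mul_apply, phipow_dA, zero_add,
        alphaE_apply, alpha_A_lo (by omega), phipow_dB,
        show 2*ℓ-1-(ℓ-1) + (x.val + ℓ) = x.val + 2*ℓ by omega, dB_mod, eta_B hℓ x]
    · refine ⟨phi ℓ ^ (x.val + ℓ) * alphaE ℓ hℓ * phi ℓ ^ (2*ℓ-1) * alphaE ℓ hℓ * phi ℓ ^ (ℓ-1),
        mul_mem (mul_mem (mul_mem (mul_mem (pow_mem hφ _) hα) (pow_mem hφ _)) hα) (pow_mem hφ _), ?_⟩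
      have s1 : ((phi ℓ ^ (ℓ-1)) (dA ℓ 0)) = dA ℓ (ℓ-1) := by rw [phipow_dA, zero_add]
      have s2 : (alphaE ℓ hℓ) (dA ℓ (ℓ-1)) = dB ℓ ℓ := by
        rw [alphaE_apply, alpha_A_lo (by omega)]; exact congrArg _ (by omega)
      have s3 : (phi ℓ ^ (2*ℓ-1)) (dB ℓ ℓ) = dB ℓ (ℓ-1) := by
        rw [phipow_dB, show ℓ + (2*ℓ-1) = (ℓ-1)+2*ℓ by omega, dB_mod]
      have s4 : (alphaE ℓ hℓ) (dB ℓ (ℓ-1)) = dC ℓ (ℓ+1) := by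
        rw [alphaE_apply, alpha_B_lo (by omega)]; exact congrArg _ (by omega)
      have s5 : (phi ℓ ^ (x.val+ℓ)) (dC ℓ (ℓ+1)) = Sum.inr (Sum.inr x) := by
        rw [phipow_dC, show (ℓ+1) + (x.val+ℓ) = x.val + (2*ℓ+1) by omega, dC_mod, eta_C x]
      simp only [Equiv.Perm.mul_apply]
      rw [s1, s2, s3, s4, s5]
  obtain ⟨g, hg, e⟩ := reach d
  obtain ⟨g', hg', e'⟩ := reach d'
  refine ⟨⟨g' * g⁻¹, mul_mem hg' (inv_mem hg)⟩, ?_⟩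
  show (g' * g⁻¹) d = d'
  have : g⁻¹ d = dA ℓ 0 := by rw [← e, Equiv.Perm.inv_def, Equiv.symm_apply_apply]
  rw [Equiv.Perm.mul_apply, this, e']

end

/-- representative dart of each edge. -/
def repN (p : ℕ) : Dart ℓ :=
  if p < ℓ then dA ℓ p else if p < 2*ℓ then dB ℓ (p-ℓ) else dC ℓ (p-2*ℓ)

section
variable {ℓ} (hℓ : 1 ≤ ℓ)
set_option linter.unusedSectionVars false

lemma dA_ne_dB (a b : ℕ) : dA ℓ a ≠ dB ℓ b := by simp [dA, dB]
lemma dA_ne_dC (a b : ℕ) : dA ℓ a ≠ dC ℓ b := by simp [dA, dC]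
lemma dB_ne_dC (a b : ℕ) : dB ℓ a ≠ dC ℓ b := by simp [dB, dC]

lemma rep_lo {p : ℕ} (h : p < ℓ) : repN ℓ p = dA ℓ p := by
  rw [repN, if_pos h]
lemma rep_mid {p : ℕ} (h1 : ℓ ≤ p) (h2 : p < 2*ℓ) : repN ℓ p = dB ℓ (p-ℓ) := by
  rw [repN, if_neg (by omega), if_pos h2]
lemma rep_hi {p : ℕ} (h : 2*ℓ ≤ p) : repN ℓ p = dC ℓ (p-2*ℓ) := by
  rw [repN, if_neg (by omega), if_neg (by omega)]

include hℓ

/-- the key pairwise-conflict property : any two distinct edges of the theta graph are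
within facial distance `ℓ`, so they get distinct colors. -/
lemma key {n : ℕ} (c : Dart ℓ → Fin n)
    (hc1 : ∀ d, c (alphaFun ℓ d) = c d)
    (hc2 : ∀ (d : Dart ℓ) (j : ℕ), 1 ≤ j → j ≤ ℓ → (phi ℓ ^ j) d ≠ d →
      (phi ℓ ^ j) d ≠ alphaFun ℓ d → c ((phi ℓ ^ j) d) ≠ c d)
    {p q : ℕ} (hpq : p < q) (hq : q < 3*ℓ+1) : c (repN ℓ p) ≠ c (repN ℓ q) := by
  by_cases hq1 : q < ℓ
  · -- both on path 1
    rw [rep_lo (by omega), rep_lo hq1]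
    have ht : (phi ℓ ^ (q-p)) (dA ℓ p) = dA ℓ q := by
      rw [phipow_dA]; exact congrArg _ (by omega)
    have h2' := hc2 (dA ℓ p) (q-p) (by omega) (by omega)
    rw [ht] at h2'
    refine (h2' ?_ ?_).symm
    · intro e; exact absurd (dA_inj (by omega) (by omega) e) (by omega)
    · rw [alpha_A_lo (by omega)]; exact dA_ne_dB q _
  · by_cases hq2 : q < 2*ℓ
    · by_cases hp1 : p < ℓ
      · -- path 1 vs path 2
        rw [rep_lo hp1, rep_mid (by omega) hq2, ← hc1 (dA ℓ p), alpha_A_lo (by omega)]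
        by_cases hcc : p + (q-ℓ) + 1 ≤ ℓ
        · have ht : (phi ℓ ^ (p+(q-ℓ)+1)) (dB ℓ (2*ℓ-1-p)) = dB ℓ (q-ℓ) := by
            rw [phipow_dB, show 2*ℓ-1-p + (p+(q-ℓ)+1) = (q-ℓ)+2*ℓ by omega, dB_mod]
          have h2' := hc2 (dB ℓ (2*ℓ-1-p)) (p+(q-ℓ)+1) (by omega) (by omega)
          rw [ht] at h2'
          refine (h2' ?_ ?_).symm
          · intro e; exact absurd (dB_inj (by omega) (by omega) e) (by omega)
          · rw [alpha_B_hi (by omega) (by omega)]; exact (dA_ne_dB _ _).symm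
        · have ht : (phi ℓ ^ (3*ℓ-1-p-q)) (dB ℓ (q-ℓ)) = dB ℓ (2*ℓ-1-p) := by
            rw [phipow_dB]; exact congrArg _ (by omega)
          have h2' := hc2 (dB ℓ (q-ℓ)) (3*ℓ-1-p-q) (by omega) (by omega)
          rw [ht] at h2'
          refine h2' ?_ ?_
          · intro e; exact absurd (dB_inj (by omega) (by omega) e) (by omega)
          · rw [alpha_B_lo (by omega)]; exact dB_ne_dC _ _
      · -- both on path 2
        rw [rep_mid (by omega) (by omega), rep_mid (by omega) hq2]
        have ht : (phi ℓ ^ (q-p)) (dB ℓ (p-ℓ)) = dB ℓ (q-ℓ) := by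
          rw [phipow_dB]; exact congrArg _ (by omega)
        have h2' := hc2 (dB ℓ (p-ℓ)) (q-p) (by omega) (by omega)
        rw [ht] at h2'
        refine (h2' ?_ ?_).symm
        · intro e; exact absurd (dB_inj (by omega) (by omega) e) (by omega)
        · rw [alpha_B_lo (by omega)]; exact dB_ne_dC _ _
    · by_cases hp1 : p < ℓ
      · -- path 1 vs path 3
        rw [rep_lo hp1, rep_hi (by omega), ← hc1 (dC ℓ (q-2*ℓ)), alpha_C_lo (by omega)]
        by_cases hcc : p + (q-2*ℓ) + 1 ≤ ℓ
        · have ht : (phi ℓ ^ (p+(q-2*ℓ)+1)) (dA ℓ (2*ℓ-(q-2*ℓ))) = dA ℓ p := by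
            rw [phipow_dA, show 2*ℓ-(q-2*ℓ) + (p+(q-2*ℓ)+1) = p+(2*ℓ+1) by omega, dA_mod]
          have h2' := hc2 (dA ℓ (2*ℓ-(q-2*ℓ))) (p+(q-2*ℓ)+1) (by omega) (by omega)
          rw [ht] at h2'
          refine h2' ?_ ?_
          · intro e; exact absurd (dA_inj (by omega) (by omega) e) (by omega)
          · rw [alpha_A_hi (by omega) (by omega)]; exact dA_ne_dC _ _
        · have ht : (phi ℓ ^ (4*ℓ-p-q)) (dA ℓ p) = dA ℓ (2*ℓ-(q-2*ℓ)) := by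
            rw [phipow_dA]; exact congrArg _ (by omega)
          have h2' := hc2 (dA ℓ p) (4*ℓ-p-q) (by omega) (by omega)
          rw [ht] at h2'
          refine (h2' ?_ ?_).symm
          · intro e; exact absurd (dA_inj (by omega) (by omega) e) (by omega)
          · rw [alpha_A_lo (by omega)]; exact dA_ne_dB _ _
      · by_cases hp2 : p < 2*ℓ
        · -- path 2 vs path 3
          rw [rep_mid (by omega) hp2, rep_hi (by omega), ← hc1 (dB ℓ (p-ℓ)), alpha_B_lo (by omega)]
          by_cases hcc : (p-ℓ) + (q-2*ℓ) + 1 ≤ ℓ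
          · have ht : (phi ℓ ^ ((p-ℓ)+(q-2*ℓ)+1)) (dC ℓ (2*ℓ-(p-ℓ))) = dC ℓ (q-2*ℓ) := by
              rw [phipow_dC, show 2*ℓ-(p-ℓ) + ((p-ℓ)+(q-2*ℓ)+1) = (q-2*ℓ)+(2*ℓ+1) by omega, dC_mod]
            have h2' := hc2 (dC ℓ (2*ℓ-(p-ℓ))) ((p-ℓ)+(q-2*ℓ)+1) (by omega) (by omega)
            rw [ht] at h2'
            refine (h2' ?_ ?_).symm
            · intro e; exact absurd (dC_inj (by omega) (by omega) e) (by omega)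
            · rw [alpha_C_hi (by omega) (by omega)]; exact (dB_ne_dC _ _).symm
          · have ht : (phi ℓ ^ (5*ℓ-p-q)) (dC ℓ (q-2*ℓ)) = dC ℓ (2*ℓ-(p-ℓ)) := by
              rw [phipow_dC]; exact congrArg _ (by omega)
            have h2' := hc2 (dC ℓ (q-2*ℓ)) (5*ℓ-p-q) (by omega) (by omega)
            rw [ht] at h2'
            refine h2' ?_ ?_
            · intro e; exact absurd (dC_inj (by omega) (by omega) e) (by omega)
            · rw [alpha_C_lo (by omega)]; exact (dA_ne_dC _ _).symm
        · -- both on path 3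
          rw [rep_hi (by omega), rep_hi (by omega)]
          have ht : (phi ℓ ^ (q-p)) (dC ℓ (p-2*ℓ)) = dC ℓ (q-2*ℓ) := by
            rw [phipow_dC]; exact congrArg _ (by omega)
          have h2' := hc2 (dC ℓ (p-2*ℓ)) (q-p) (by omega) (by omega)
          rw [ht] at h2'
          refine (h2' ?_ ?_).symm
          · intro e; exact absurd (dC_inj (by omega) (by omega) e) (by omega)
          · rw [alpha_C_lo (by omega)]; exact (dA_ne_dC _ _).symm

end

/-- The theta graph `Θ(ℓ,ℓ,ℓ+1)` as a plane map. -/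
def thetaMap (hℓ : 1 ≤ ℓ) : PlaneMap where
  D := Dart ℓ
  fD := by haveI : NeZero (2*ℓ) := ⟨by omega⟩; infer_instance
  σ := sigma ℓ hℓ
  α := alphaE ℓ hℓ
  αinvol := alpha_invol hℓ
  αfixfree := alpha_fixfree hℓ
  conn := conn_theta hℓ
  euler := by
    rw [sigma_mul_alpha hℓ, count_sigma hℓ, count_alpha hℓ, count_phi hℓ]
    push_cast
    ring

end FECaux

open FECaux in
/-- Tightness of the Facial Edge-Coloring Conjecture. -/
theorem exists_plane_graph_facial_index_eq (ℓ : ℕ) (hℓ : 1 ≤ ℓ) :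
    ∃ M : PlaneMap,
      (∃ c : M.D → Fin (3 * ℓ + 1), M.IsFacialEdgeColoring ℓ (3 * ℓ + 1) c) ∧
      (∀ n : ℕ, (∃ c : M.D → Fin n, M.IsFacialEdgeColoring ℓ n c) → 3 * ℓ + 1 ≤ n) := by
  refine ⟨thetaMap ℓ hℓ, ⟨fun d => ⟨eIdxN ℓ d, by have := eIdx_lt hℓ d; omega⟩, ?_, ?_⟩, ?_⟩
  · intro d
    exact Fin.ext (eIdx_alpha hℓ d)
  · have hmul : (thetaMap ℓ hℓ).σ * (thetaMap ℓ hℓ).α = phi ℓ := sigma_mul_alpha hℓ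
    rw [hmul]
    intro d j hj h1 h2 he
    rw [Finset.mem_Icc] at hj
    have hfib := eIdx_fiber hℓ (congrArg Fin.val he).symm
    rcases hfib with h' | h'
    · exact h1 h'
    · exact h2 h'
  · rintro n ⟨c, hc1, hc2⟩
    have hmul : (thetaMap ℓ hℓ).σ * (thetaMap ℓ hℓ).α = phi ℓ := sigma_mul_alpha hℓ
    rw [hmul] at hc2
    have hc2' : ∀ (d : Dart ℓ) (j : ℕ), 1 ≤ j → j ≤ ℓ → (phi ℓ ^ j) d ≠ d →
        (phi ℓ ^ j) d ≠ alphaFun ℓ d → c ((phi ℓ ^ j) d) ≠ c d := by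
      intro d j hj1 hj2 h1 h2
      exact hc2 d j (Finset.mem_Icc.mpr ⟨hj1, hj2⟩) h1 h2
    have hinj : Function.Injective (fun i : Fin (3*ℓ+1) => c (repN ℓ i.val)) := by
      intro i i' he
      by_contra hne
      have hne' : i.val ≠ i'.val := fun h => hne (Fin.ext h)
      rcases Nat.lt_or_ge i.val i'.val with h | h
      · exact key hℓ c hc1 hc2' h i'.isLt he
      · exact key hℓ c hc1 hc2' (by omega) i.isLt he.symm
    have hcard := Fintype.card_le_of_injective _ hinj
    simpa using hcard
end
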